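/- arXiv:math/0604492 — 7 statements merged into one kernel-verified Lean document; each statement's English description precedes it below -/
import Mathlib

section
/- Let G be a discrete finitely generated group and for j = 1, 2 let (H^j_i)_{i≥0} be decreasing sequences of finite-index subgroups of G, with associated subodometers ←G_j = lim_{←i}(G/H^j_i, π_i). Let e_j ∈ ←G_j denote the sequence whose i-th coordinate is the coset of the identity element e of G in G/H^j_i. Then there exists a factor map π : ←G_1 → ←G_2 with π(e_1) = e_2 if and only if for every i ≥ 0 there exists k ≥ 0 such that H^1_k ⊆ H^2_i. -/
open Pointwise MeasureTheory

/-- Compatibility condition defining the inverse limit `lim_{←i} (G/Γᵢ, πᵢ)`: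
a sequence of cosets is compatible if any representative of the `(i+1)`-th coordinate
also represents the `i`-th coordinate. -/
def Compat {G : Type*} [Group G] (Γ : ℕ → Subgroup G) (x : ∀ i, G ⧸ Γ i) : Prop :=
  ∀ (i : ℕ) (g : G),
    (QuotientGroup.mk g : G ⧸ Γ (i + 1)) = x (i + 1) →
    (QuotientGroup.mk g : G ⧸ Γ i) = x i

/-- The subodometer `←G = lim_{←i} (G/Γᵢ, πᵢ)` associated to a sequence of subgroups. -/
def Subodometer {G : Type*} [Group G] (Γ : ℕ → Subgroup G) : Type _ :=
  { x : ∀ i, G ⧸ Γ i // Compat Γ x }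

/-- Topology of the subodometer: subspace topology of the product of the (discrete)
coset spaces. -/
instance {G : Type*} [Group G] (Γ : ℕ → Subgroup G) [TopologicalSpace G] :
    TopologicalSpace (Subodometer Γ) :=
  instTopologicalSpaceSubtype

lemma compat_smul {G : Type*} [Group G] (Γ : ℕ → Subgroup G) (g : G) (x : ∀ i, G ⧸ Γ i)
    (hx : Compat Γ x) : Compat Γ (fun i => g • x i) := by
  intro i h hh
  change (QuotientGroup.mk h : G ⧸ Γ (i + 1)) = g • x (i + 1) at hh
  show (QuotientGroup.mk h : G ⧸ Γ i) = g • x i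
  obtain ⟨a, ha⟩ := QuotientGroup.mk_surjective (x (i + 1))
  have h1 : (QuotientGroup.mk (g * a) : G ⧸ Γ (i + 1)) = g • x (i + 1) := by
    rw [← ha]; rfl
  rw [← h1] at hh
  have h2 : (QuotientGroup.mk (g⁻¹ * h) : G ⧸ Γ (i + 1)) = QuotientGroup.mk a := by
    rw [QuotientGroup.eq] at hh ⊢
    simpa [mul_assoc] using hh
  have h3 := hx i _ (h2.trans ha)
  have h4 : (QuotientGroup.mk (g * (g⁻¹ * h)) : G ⧸ Γ i) = g • x i := by
    rw [show (QuotientGroup.mk (g * (g⁻¹ * h)) : G ⧸ Γ i)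
        = g • (QuotientGroup.mk (g⁻¹ * h) : G ⧸ Γ i) from rfl, h3]
  simpa [mul_assoc] using h4

/-- The action of `G` on the subodometer by coordinatewise left multiplication. -/
instance {G : Type*} [Group G] (Γ : ℕ → Subgroup G) : MulAction G (Subodometer Γ) where
  smul g x := ⟨fun i => g • x.1 i, compat_smul Γ g x.1 x.2⟩
  one_smul x := Subtype.ext (funext fun i => one_smul G (x.1 i))
  mul_smul g h x := Subtype.ext (funext fun i => mul_smul g h (x.1 i))

/-- The distinguished point `e` of the subodometer: the sequence of cosets of the
neutral element. -/
def odoE {G : Type*} [Group G] (Γ : ℕ → Subgroup G) (hΓ : ∀ i, Γ (i + 1) ≤ Γ i) :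
    Subodometer Γ :=
  ⟨fun i => QuotientGroup.mk 1, by
    intro i g hg
    rw [QuotientGroup.eq] at hg ⊢
    exact hΓ i hg⟩

/-- The canonical map `τ : G → ←G`, `τ(g) = (gΓᵢ)ᵢ`. -/
def odoTau {G : Type*} [Group G] (Γ : ℕ → Subgroup G) (hΓ : ∀ i, Γ (i + 1) ≤ Γ i) (g : G) :
    Subodometer Γ :=
  ⟨fun i => QuotientGroup.mk g, by
    intro i h hh
    rw [QuotientGroup.eq] at hh ⊢
    exact hΓ i hh⟩

/-- A factor map between two `G`-systems: a continuous surjection commuting with the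
`G`-actions. -/
def IsFactorMap (G : Type*) {X Y : Type*} [Group G] [TopologicalSpace X] [TopologicalSpace Y]
    [MulAction G X] [MulAction G Y] (π : X → Y) : Prop :=
  Continuous π ∧ Function.Surjective π ∧ ∀ (g : G) (x : X), π (g • x) = g • π x

instance quotDiscrete {G : Type*} [Group G] [TopologicalSpace G] [DiscreteTopology G]
    (Γ : Subgroup G) : DiscreteTopology (G ⧸ Γ) :=
  discreteTopology_iff_forall_isOpen.mpr fun _ => isOpen_coinduced.mpr (isOpen_discrete _)

lemma compat_down {G : Type*} [Group G] {Γ : ℕ → Subgroup G} {x : ∀ i, G ⧸ Γ i}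
    (hx : Compat Γ x) (g : G) :
    ∀ n, (QuotientGroup.mk g : G ⧸ Γ n) = x n →
      ∀ m, m ≤ n → (QuotientGroup.mk g : G ⧸ Γ m) = x m := by
  intro n
  induction n with
  | zero => intro h m hm; obtain rfl := Nat.le_zero.mp hm; exact h
  | succ n ih =>
    intro h m hm
    rcases eq_or_lt_of_le hm with rfl | hlt
    · exact h
    · exact ih (hx n g h) m (Nat.lt_succ_iff.mp hlt)

lemma isClosed_compat {G : Type*} [Group G] [TopologicalSpace G] [DiscreteTopology G]
    (Γ : ℕ → Subgroup G) : IsClosed {x : ∀ i, G ⧸ Γ i | Compat Γ x} := by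
  have : {x : ∀ i, G ⧸ Γ i | Compat Γ x} =
      ⋂ (i : ℕ) (g : G),
        ((fun x : ∀ i, G ⧸ Γ i => x (i + 1)) ⁻¹' {y | (QuotientGroup.mk g : G ⧸ Γ (i + 1)) = y})ᶜ ∪
          (fun x : ∀ i, G ⧸ Γ i => x i) ⁻¹' {y | (QuotientGroup.mk g : G ⧸ Γ i) = y} := by
    ext x
    simp only [Set.mem_setOf_eq, Set.mem_iInter, Set.mem_union, Set.mem_compl_iff,
      Set.mem_preimage, Compat]
    constructor
    · intro h i g
      by_cases hg : (QuotientGroup.mk g : G ⧸ Γ (i + 1)) = x (i + 1)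
      · exact Or.inr (h i g hg)
      · exact Or.inl hg
    · intro h i g hg
      rcases h i g with h' | h'
      · exact absurd hg h'
      · exact h'
  rw [this]
  refine isClosed_iInter fun i => isClosed_iInter fun g => IsClosed.union ?_ ?_
  · exact (IsOpen.preimage (continuous_apply (i + 1)) (isOpen_discrete _)).isClosed_compl
  · exact IsClosed.preimage (continuous_apply i) (isClosed_discrete _)

/-- Lemma `factor`: there is a factor map `←G₁ → ←G₂` sending `e₁` to
`e₂` iff every `H²ᵢ` contains some `H¹ₖ`. -/
theorem statement0 {G : Type*} [Group G] [Group.FG G] [TopologicalSpace G] [DiscreteTopology G]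
    (H1 H2 : ℕ → Subgroup G)
    (h1dec : ∀ i, H1 (i + 1) ≤ H1 i) (h2dec : ∀ i, H2 (i + 1) ≤ H2 i)
    (h1fin : ∀ i, (H1 i).FiniteIndex) (h2fin : ∀ i, (H2 i).FiniteIndex) :
    (∃ π : Subodometer H1 → Subodometer H2,
        IsFactorMap G π ∧ π (odoE H1 h1dec) = odoE H2 h2dec)
      ↔ ∀ i : ℕ, ∃ k : ℕ, H1 k ≤ H2 i := by
  have h1anti : Antitone H1 := antitone_nat_of_succ_le h1dec
  have h2anti : Antitone H2 := antitone_nat_of_succ_le h2dec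
  constructor
  · rintro ⟨π, ⟨hcont, hsurj, hequiv⟩, he⟩ i
    have hUopen : IsOpen ((fun x : Subodometer H1 => (π x).1 i) ⁻¹'
        {y | y = (QuotientGroup.mk 1 : G ⧸ H2 i)}) := by
      have hc : Continuous fun x : Subodometer H1 => (π x).1 i :=
        (continuous_apply i).comp (continuous_subtype_val.comp hcont)
      exact IsOpen.preimage hc (isOpen_discrete _)
    obtain ⟨V, hVopen, hV⟩ := isOpen_induced_iff.mp hUopen
    have heU : odoE H1 h1dec ∈ (fun x : Subodometer H1 => (π x).1 i) ⁻¹'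
        {y | y = (QuotientGroup.mk 1 : G ⧸ H2 i)} := by
      simp only [Set.mem_preimage, Set.mem_setOf_eq, he]
      rfl
    have heV : (odoE H1 h1dec).1 ∈ V := by rw [← hV] at heU; exact heU
    obtain ⟨I, u, hu, hsub⟩ := isOpen_pi_iff.mp hVopen _ heV
    refine ⟨I.sup id, fun h hh => ?_⟩
    set n := I.sup id with hn
    have hx : odoTau H1 h1dec h ∈ (fun x : Subodometer H1 => (π x).1 i) ⁻¹'
        {y | y = (QuotientGroup.mk 1 : G ⧸ H2 i)} := by
      rw [← hV]
      refine Set.mem_preimage.mpr (hsub fun j hj => ?_)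
      have hjn : j ≤ n := Finset.le_sup (f := id) hj
      have hmem : h ∈ H1 j := h1anti hjn hh
      have : (odoTau H1 h1dec h).1 j = (odoE H1 h1dec).1 j := by
        show (QuotientGroup.mk h : G ⧸ H1 j) = QuotientGroup.mk 1
        rw [QuotientGroup.eq]
        simpa using (H1 j).inv_mem hmem
      rw [this]
      exact (hu j hj).2
    have hx' : (π (odoTau H1 h1dec h)).1 i = QuotientGroup.mk 1 := hx
    have heq : odoTau H1 h1dec h = h • odoE H1 h1dec := by
      apply Subtype.ext; funext j
      show (QuotientGroup.mk h : G ⧸ H1 j) = QuotientGroup.mk (h * 1)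
      rw [mul_one]
    rw [heq, hequiv, he] at hx'
    have : (QuotientGroup.mk (h * 1) : G ⧸ H2 i) = QuotientGroup.mk 1 := hx'
    rw [QuotientGroup.eq] at this
    simpa using (H2 i).inv_mem this
  · intro h
    choose k hk using h
    let K : ℕ → ℕ := fun i => Nat.rec (k 0) (fun i Ki => max Ki (k (i + 1))) i
    have hKmono : Monotone K := monotone_nat_of_le_succ fun n => le_max_left _ _
    have hKle : ∀ i, H1 (K i) ≤ H2 i := by
      intro i
      cases i with
      | zero => exact hk 0
      | succ n => exact (h1anti (le_max_right _ _)).trans (hk (n + 1))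
    let F : ∀ i, (G ⧸ H1 (K i)) → (G ⧸ H2 i) := fun i =>
      Quotient.map' id (fun a b hab => by
        rw [QuotientGroup.leftRel_apply] at hab ⊢
        exact hKle i hab)
    have hF : ∀ (i : ℕ) (g : G),
        F i (QuotientGroup.mk g) = (QuotientGroup.mk g : G ⧸ H2 i) := fun i g => rfl
    have hcompat : ∀ x : Subodometer H1, Compat H2 (fun i => F i (x.1 (K i))) := by
      intro x i g hg
      obtain ⟨a, ha⟩ := QuotientGroup.mk_surjective (x.1 (K (i + 1)))
      have hg' : (QuotientGroup.mk g : G ⧸ H2 (i + 1)) = F (i + 1) (x.1 (K (i + 1))) := hg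
      have h1 : F (i + 1) (x.1 (K (i + 1))) = QuotientGroup.mk a := by
        rw [← ha]; exact hF (i + 1) a
      rw [h1] at hg'
      rw [QuotientGroup.eq] at hg'
      have hga : (QuotientGroup.mk g : G ⧸ H2 i) = QuotientGroup.mk a := by
        rw [QuotientGroup.eq]; exact h2dec i hg'
      have h2 : (QuotientGroup.mk a : G ⧸ H1 (K i)) = x.1 (K i) :=
        compat_down x.2 a (K (i + 1)) ha (K i) (hKmono (Nat.le_succ i))
      show (QuotientGroup.mk g : G ⧸ H2 i) = F i (x.1 (K i))
      rw [← h2, hF i a, hga]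
    let pmap : Subodometer H1 → Subodometer H2 :=
      fun x => ⟨fun i => F i (x.1 (K i)), hcompat x⟩
    have hpcont : Continuous pmap := by
      apply Continuous.subtype_mk
      apply continuous_pi
      intro i
      have h1 : Continuous fun x : Subodometer H1 => x.1 (K i) :=
        (continuous_apply (K i)).comp continuous_subtype_val
      exact continuous_of_discreteTopology.comp h1
    have hpequiv : ∀ (g : G) (x : Subodometer H1), pmap (g • x) = g • pmap x := by
      intro g x
      apply Subtype.ext; funext i
      obtain ⟨a, ha⟩ := QuotientGroup.mk_surjective (x.1 (K i))
      show F i (g • x.1 (K i)) = g • F i (x.1 (K i))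
      rw [← ha]
      rfl
    have hpe : pmap (odoE H1 h1dec) = odoE H2 h2dec := by
      apply Subtype.ext; funext i; exact hF i 1
    have hptau : ∀ g : G, pmap (odoTau H1 h1dec g) = odoTau H2 h2dec g := by
      intro g; apply Subtype.ext; funext i; exact hF i g
    haveI : ∀ i, CompactSpace (G ⧸ H1 i) := fun i => by
      haveI := h1fin i; infer_instance
    haveI hcs : CompactSpace (Subodometer H1) :=
      isCompact_iff_compactSpace.mp (isClosed_compat H1).isCompact
    haveI ht2 : T2Space (Subodometer H2) :=
      (inferInstance : T2Space {x : ∀ i, G ⧸ H2 i // Compat H2 x})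
    have hclosed : IsClosed (Set.range pmap) := (isCompact_range hpcont).isClosed
    have hsurj : Function.Surjective pmap := by
      intro y
      have hy : y ∈ closure (Set.range pmap) := by
        rw [mem_closure_iff]
        intro O hO hyO
        obtain ⟨V, hVopen, hV⟩ := isOpen_induced_iff.mp hO
        have hyV : y.1 ∈ V := by rw [← hV] at hyO; exact hyO
        obtain ⟨I, u, hu, hsub⟩ := isOpen_pi_iff.mp hVopen _ hyV
        set n := I.sup id with hn
        obtain ⟨g, hg⟩ := QuotientGroup.mk_surjective (y.1 n)
        refine ⟨pmap (odoTau H1 h1dec g), ?_, Set.mem_range_self _⟩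
        rw [← hV]
        refine Set.mem_preimage.mpr (hsub fun j hj => ?_)
        have hjn : j ≤ n := Finset.le_sup (f := id) hj
        have : (pmap (odoTau H1 h1dec g)).1 j = y.1 j := by
          have h1 : (pmap (odoTau H1 h1dec g)).1 j = QuotientGroup.mk g := hF j g
          rw [h1]
          exact compat_down y.2 g n hg j hjn
        rw [this]
        exact (hu j hj).2
      rw [hclosed.closure_eq] at hy
      exact hy
    exact ⟨pmap, ⟨hpcont, hsurj, hpequiv⟩, hpe⟩
end

section
/- Let G be a discrete finitely generated group and let (Γ_i)_{i≥0} be a decreasing sequence of finite-index subgroups of G with associated subodometer lim_{←i}(G/Γ_i, π_i). Then there exists a decreasing sequence (K_i)_{i≥0} of finite-index normal subgroups of G with K_i ⊆ Γ_i for every i, and a factor map from the odometer lim_{←i}(G/K_i, π_i) onto the subodometer lim_{←i}(G/Γ_i, π_i); that is, every subodometer admits a G-odometer as an extension. -/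
open Pointwise MeasureTheory

/-- The natural map `G ⧸ H → G ⧸ K` when `H ≤ K`. -/
def quotMap {G : Type*} [Group G] {H K : Subgroup G} (h : H ≤ K) : G ⧸ H → G ⧸ K :=
  Quotient.map' id (fun a b hab => by
    rw [QuotientGroup.leftRel_apply] at hab ⊢
    exact h hab)

lemma quotMap_mk {G : Type*} [Group G] {H K : Subgroup G} (h : H ≤ K) (a : G) :
    quotMap h (QuotientGroup.mk a) = QuotientGroup.mk a := rfl

open CategoryTheory in
/-- Proposition `propodo`: every subodometer admits a `G`-odometer as
an extension. -/
theorem statement1 {G : Type*} [Group G] [Group.FG G] [TopologicalSpace G] [DiscreteTopology G]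
    (Γ : ℕ → Subgroup G) (hdec : ∀ i, Γ (i + 1) ≤ Γ i) (hfin : ∀ i, (Γ i).FiniteIndex) :
    ∃ K : ℕ → Subgroup G,
      (∀ i, K (i + 1) ≤ K i) ∧ (∀ i, (K i).Normal) ∧ (∀ i, (K i).FiniteIndex) ∧
      (∀ i, K i ≤ Γ i) ∧
      ∃ π : Subodometer K → Subodometer Γ, IsFactorMap G π := by
  set K : ℕ → Subgroup G := fun i => (Γ i).normalCore with hKdef
  have hKle : ∀ i, K i ≤ Γ i := fun i => Subgroup.normalCore_le _
  have hKdec : ∀ i, K (i + 1) ≤ K i := fun i => Subgroup.normalCore_mono (hdec i)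
  have hKfin : ∀ i, (K i).FiniteIndex := fun i => by
    exact @Subgroup.finiteIndex_normalCore G _ (Γ i) (hfin i)
  haveI : ∀ i, (K i).FiniteIndex := hKfin
  haveI hKfinq : ∀ i, Finite (G ⧸ K i) :=
    fun i => @Subgroup.finite_quotient_of_finiteIndex G _ (K i) (hKfin i)
  let p : ∀ i, G ⧸ K i → G ⧸ Γ i := fun i => quotMap (hKle i)
  let q : ∀ i, G ⧸ K (i + 1) → G ⧸ K i := fun i => quotMap (hKdec i)
  -- the factor map is compatible
  have hcompat : ∀ x : Subodometer K, Compat Γ (fun i => p i (x.1 i)) := by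
    rintro ⟨x, hx⟩ i g hg
    obtain ⟨a, ha⟩ := QuotientGroup.mk_surjective (x (i + 1))
    have hg' : (QuotientGroup.mk g : G ⧸ Γ (i + 1)) = p (i + 1) (x (i + 1)) := hg
    rw [← ha] at hg'
    simp only [p, quotMap_mk] at hg'
    have hga : (QuotientGroup.mk g : G ⧸ Γ i) = QuotientGroup.mk a := by
      rw [QuotientGroup.eq] at hg' ⊢
      exact hdec i hg'
    have hxi : x i = QuotientGroup.mk a := (hx i a ha).symm
    show (QuotientGroup.mk g : G ⧸ Γ i) = p i (x i)
    rw [hxi]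
    simp only [p, quotMap_mk]
    exact hga
  refine ⟨K, hKdec, fun i => Subgroup.normalCore_normal _, hKfin, hKle,
    fun x => ⟨fun i => p i (x.1 i), hcompat x⟩, ?_, ?_, ?_⟩
  · -- continuity
    haveI : ∀ i, DiscreteTopology (G ⧸ K i) := fun i => by
      rw [discreteTopology_iff_isOpen_singleton]
      intro s
      rw [isOpen_coinduced]
      exact isOpen_discrete _
    have hval : Continuous (Subtype.val : Subodometer K → ∀ i, G ⧸ K i) :=
      continuous_induced_dom
    apply Continuous.subtype_mk
    apply continuous_pi
    intro i
    exact continuous_of_discreteTopology.comp ((continuous_apply i).comp hval)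
  · -- surjectivity
    rintro ⟨y, hy⟩
    -- the inverse system of fibers over `y`
    let X : ℕ → Type _ := fun n => { c : G ⧸ K n // p n c = y n }
    let f : ∀ n, X (n + 1) → X n := fun n c => ⟨q n c.1, by
      obtain ⟨a, ha⟩ := QuotientGroup.mk_surjective c.1
      have h1 : p (n + 1) c.1 = y (n + 1) := c.2
      rw [← ha] at h1
      simp only [p, quotMap_mk] at h1
      have h2 : (QuotientGroup.mk a : G ⧸ Γ n) = y n := hy n a h1
      rw [← ha]
      simp only [p, q, quotMap_mk]
      exact h2⟩
    let F : ℕᵒᵖ ⥤ Type _ := Functor.ofOpSequence (X := X) (fun n => TypeCat.ofHom (f n))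
    haveI : ∀ j : ℕᵒᵖ, Finite (F.obj j) := fun j => inferInstanceAs (Finite (X j.unop))
    haveI : ∀ j : ℕᵒᵖ, Nonempty (F.obj j) := fun j => by
      obtain ⟨a, ha⟩ := QuotientGroup.mk_surjective (y j.unop)
      exact ⟨show X j.unop from ⟨QuotientGroup.mk a, by
        simp only [p, quotMap_mk]; exact ha⟩⟩
    obtain ⟨s, hs⟩ := nonempty_sections_of_finite_inverse_system F
    have hstep : ∀ n : ℕ, f n (s (Opposite.op (n + 1))) = s (Opposite.op n) := by
      intro n
      have := hs (j := Opposite.op (n + 1)) (j' := Opposite.op n)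
        (homOfLE (Nat.le_add_right n 1)).op
      rwa [Functor.ofOpSequence_map_homOfLE_succ] at this
    let x : ∀ i, G ⧸ K i := fun i => (s (Opposite.op i)).1
    have hx : Compat K x := by
      intro i g hg
      have hxi : x i = q i (x (i + 1)) := congrArg Subtype.val (hstep i).symm
      show (QuotientGroup.mk g : G ⧸ K i) = x i
      rw [hxi, ← hg]
      simp only [q, quotMap_mk]
    refine ⟨⟨x, hx⟩, Subtype.ext (funext fun i => ?_)⟩
    exact (s (Opposite.op i)).2
  · -- equivariance
    intro g x
    refine Subtype.ext (funext fun i => ?_)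
    show p i (g • x.1 i) = g • p i (x.1 i)
    obtain ⟨a, ha⟩ := QuotientGroup.mk_surjective (x.1 i)
    rw [← ha]
    simp only [p, MulAction.Quotient.smul_mk, quotMap_mk]
end

section
/- Let G be a discrete group acting by homeomorphisms on a compact metric space X such that the action is minimal (every G-orbit is dense in X). If Γ is a finite-index subgroup of G, then for every x ∈ X the closure Ω_Γ(x) of the Γ-orbit {γ·x : γ ∈ Γ} is a minimal set for the restricted Γ-action: every Γ-orbit of a point of Ω_Γ(x) is dense in Ω_Γ(x). -/
open Pointwise MeasureTheory

private lemma smul_mem_cls {G X : Type*} [Group G] [TopologicalSpace X] [MulAction G X]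
    (hc : ∀ g : G, Continuous fun x : X => g • x)
    (H : Subgroup G) {g : G} (hg : g ∈ H) {z w : X}
    (hw : w ∈ closure ((fun g : G => g • z) '' (H : Set G))) :
    g • w ∈ closure ((fun g : G => g • z) '' (H : Set G)) := by
  have h1 : g • w ∈ (fun x => g • x) '' closure ((fun g : G => g • z) '' (H : Set G)) :=
    ⟨w, hw, rfl⟩
  have h2 := image_closure_subset_closure_image (hc g) h1
  refine closure_mono ?_ h2
  rintro _ ⟨_, ⟨h', hh', rfl⟩, rfl⟩
  exact ⟨g * h', H.mul_mem hg hh', by simp [mul_smul]⟩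

private lemma aux_min {G X : Type*} [Group G] [MetricSpace X] [CompactSpace X] [MulAction G X]
    (hc : ∀ g : G, Continuous fun x : X => g • x)
    (hmin : ∀ x : X, Dense (Set.range fun g : G => g • x))
    (N : Subgroup G) [hN : N.Normal] [N.FiniteIndex] :
    ∀ z : X, ∀ w ∈ closure ((fun g : G => g • z) '' (N : Set G)),
      z ∈ closure ((fun g : G => g • w) '' (N : Set G)) := by
  intro z w hw
  haveI : Nonempty X := ⟨z⟩
  set S : Set (Set X) := {M | M.Nonempty ∧ IsClosed M ∧ ∀ n ∈ N, ∀ p ∈ M, n • p ∈ M} with hS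
  -- Zorn: a minimal nonempty closed invariant set exists
  have hzorn : ∃ m ⊆ (Set.univ : Set X), Minimal (· ∈ S) m := by
    apply zorn_superset_nonempty
    · intro c hcS hchain hcne
      haveI : Nonempty c := hcne.to_subtype
      refine ⟨⋂₀ c, ⟨?_, ?_, ?_⟩, fun s hs => Set.sInter_subset_of_mem hs⟩
      · have hdir : Directed (· ⊇ ·) (fun s : c => (s : Set X)) := by
          intro s t
          rcases hchain.total s.2 t.2 with h | h
          · exact ⟨s, subset_refl _, h⟩
          · exact ⟨t, h, subset_refl _⟩
        have hne := IsCompact.nonempty_iInter_of_directed_nonempty_isCompact_isClosed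
          (fun s : c => (s : Set X)) hdir (fun s => (hcS s.2).1)
          (fun s => (hcS s.2).2.1.isCompact) (fun s => (hcS s.2).2.1)
        rwa [Set.sInter_eq_iInter]
      · exact isClosed_sInter fun s hs => (hcS hs).2.1
      · intro n hn p hp
        exact Set.mem_sInter.2 fun s hs => (hcS hs).2.2 n hn p (Set.mem_sInter.1 hp s hs)
    · exact ⟨Set.univ_nonempty, isClosed_univ, fun _ _ _ _ => Set.mem_univ _⟩
  obtain ⟨M₀, -, hM₀⟩ := hzorn
  obtain ⟨m₀, hm₀⟩ := hM₀.prop.1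
  -- the union of the (finitely many) translates of M₀ is all of X
  set U : Set X := ⋃ q : G ⧸ N, (fun x => (Quotient.out q) • x) '' M₀ with hU
  have hUclosed : IsClosed U :=
    isClosed_iUnion_of_finite fun q => ((hM₀.prop.2.1).isCompact.image (hc _)).isClosed
  have hcover : ∀ p : X, ∃ g : G, p ∈ (fun x => g • x) '' M₀ := by
    intro p
    have hsub : Set.range (fun g : G => g • m₀) ⊆ U := by
      rintro _ ⟨g, rfl⟩
      have hmem : g⁻¹ * Quotient.out ((g : G ⧸ N)) ∈ N :=
        QuotientGroup.eq.mp (QuotientGroup.out_eq' ((g : G ⧸ N))).symm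
      refine Set.mem_iUnion.2 ⟨(g : G ⧸ N),
        (g⁻¹ * Quotient.out ((g : G ⧸ N)))⁻¹ • m₀,
        hM₀.prop.2.2 _ (N.inv_mem hmem) m₀ hm₀, ?_⟩
      show Quotient.out ((g : G ⧸ N)) • (g⁻¹ * Quotient.out ((g : G ⧸ N)))⁻¹ • m₀ = g • m₀
      rw [← mul_smul]
      congr 1
      group
    have hp : p ∈ U := closure_minimal hsub hUclosed (hmin m₀ p)
    obtain ⟨_, ⟨q, rfl⟩, hq⟩ := hp
    exact ⟨Quotient.out q, hq⟩
  obtain ⟨g, hzg⟩ := hcover z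
  set gM : Set X := (fun x => g • x) '' M₀ with hgM
  have hgMS : gM ∈ S := by
    refine ⟨⟨g • m₀, m₀, hm₀, rfl⟩, ((hM₀.prop.2.1).isCompact.image (hc _)).isClosed, ?_⟩
    rintro n hn _ ⟨m, hm, rfl⟩
    have hconj : g⁻¹ * n * g ∈ N := by simpa using hN.conj_mem n hn g⁻¹
    refine ⟨(g⁻¹ * n * g) • m, hM₀.prop.2.2 _ hconj m hm, ?_⟩
    show g • (g⁻¹ * n * g) • m = n • g • m
    rw [← mul_smul, ← mul_smul]
    congr 1
    group
  have hgMmin : ∀ M' ∈ S, M' ⊆ gM → gM ⊆ M' := by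
    intro M' hM'S hM'sub
    set M'' : Set X := (fun x => g⁻¹ • x) '' M' with hM''
    have hM''sub : M'' ⊆ M₀ := by
      rintro _ ⟨p, hp, rfl⟩
      obtain ⟨m, hm, rfl⟩ := hM'sub hp
      simpa [← mul_smul] using hm
    have hM''S : M'' ∈ S := by
      refine ⟨hM'S.1.image _, (hM'S.2.1.isCompact.image (hc _)).isClosed, ?_⟩
      rintro n hn _ ⟨p, hp, rfl⟩
      have hconj : g * n * g⁻¹ ∈ N := hN.conj_mem n hn g
      refine ⟨(g * n * g⁻¹) • p, hM'S.2.2 _ hconj p hp, ?_⟩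
      show g⁻¹ • (g * n * g⁻¹) • p = n • g⁻¹ • p
      rw [← mul_smul, ← mul_smul]
      congr 1
      group
    have h0 : M₀ ⊆ M'' := hM₀.2 hM''S hM''sub
    rintro _ ⟨m, hm, rfl⟩
    obtain ⟨p, hp, hpe⟩ := h0 hm
    have : g • m = p := by
      rw [← hpe, ← mul_smul]
      simp
    show g • m ∈ M'
    rwa [this]
  -- closure of the N-orbit of z equals gM
  have hclS : ∀ p : X, closure ((fun g0 : G => g0 • p) '' (N : Set G)) ∈ S := by
    intro p
    refine ⟨⟨p, subset_closure ⟨1, N.one_mem, one_smul G p⟩⟩, isClosed_closure, ?_⟩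
    intro n hn q hq
    exact smul_mem_cls hc N hn hq
  have hclsub : ∀ p ∈ gM, closure ((fun g0 : G => g0 • p) '' (N : Set G)) ⊆ gM := by
    intro p hp
    refine closure_minimal ?_ ((hM₀.prop.2.1).isCompact.image (hc _)).isClosed
    rintro _ ⟨n, hn, rfl⟩
    exact hgMS.2.2 n hn p hp
  have hΩ : gM ⊆ closure ((fun g0 : G => g0 • z) '' (N : Set G)) :=
    hgMmin _ (hclS z) (hclsub z hzg)
  have hwgM : w ∈ gM := hclsub z hzg hw
  have hΩ' : gM ⊆ closure ((fun g0 : G => g0 • w) '' (N : Set G)) :=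
    hgMmin _ (hclS w) (hclsub w hwgM)
  exact hΩ' hzg

/-- Lemma `minimal`: if the `G`-action on `X` is minimal and
`Γ ≤ G` has finite index, then the closure of every `Γ`-orbit is `Γ`-minimal. -/
theorem statement4 {G X : Type*} [Group G] [MetricSpace X] [CompactSpace X] [MulAction G X]
    (hc : ∀ g : G, Continuous fun x : X => g • x)
    (hmin : ∀ x : X, Dense (Set.range fun g : G => g • x))
    (Γ : Subgroup G) (hΓ : Γ.FiniteIndex) (x : X) :
    ∀ y ∈ closure ((fun g : G => g • x) '' (Γ : Set G)),
      closure ((fun g : G => g • x) '' (Γ : Set G)) ⊆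
        closure ((fun g : G => g • y) '' (Γ : Set G)) := by
  haveI := hΓ
  set N : Subgroup G := Γ.normalCore with hNdef
  intro y hy
  -- cover the Γ-orbit closure of x by translates of the N-orbit closure
  set C : Set X := closure ((fun g : G => g • x) '' (N : Set G)) with hC
  have hCclosed : IsCompact C := isClosed_closure.isCompact
  set V : Set X := ⋃ c : Γ ⧸ N.subgroupOf Γ, (fun p => ((Quotient.out c : Γ) : G) • p) '' C
    with hV
  have hVclosed : IsClosed V :=
    isClosed_iUnion_of_finite fun c => (hCclosed.image (hc _)).isClosed
  have horb : ((fun g : G => g • x) '' (Γ : Set G)) ⊆ V := by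
    rintro _ ⟨δ, hδ, rfl⟩
    set δ' : Γ := ⟨δ, hδ⟩ with hδ'
    set q : Γ ⧸ N.subgroupOf Γ := (δ' : Γ ⧸ N.subgroupOf Γ) with hq
    have hmem : δ'⁻¹ * Quotient.out q ∈ N.subgroupOf Γ :=
      QuotientGroup.eq.mp (QuotientGroup.out_eq' q).symm
    have hmemN : ((δ'⁻¹ * Quotient.out q : Γ) : G) ∈ N :=
      (Subgroup.mem_subgroupOf).mp hmem
    refine Set.mem_iUnion.2 ⟨q, ((δ'⁻¹ * Quotient.out q : Γ) : G)⁻¹ • x,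
      subset_closure ⟨_, N.inv_mem hmemN, rfl⟩, ?_⟩
    show ((Quotient.out q : Γ) : G) • ((δ'⁻¹ * Quotient.out q : Γ) : G)⁻¹ • x = δ • x
    rw [← mul_smul]
    congr 1
    push_cast
    group
    rfl
  have hyV : y ∈ V := closure_minimal horb hVclosed hy
  obtain ⟨_, ⟨c, rfl⟩, p, hp, hpy⟩ := hyV
  set γ : G := ((Quotient.out c : Γ) : G) with hγdef
  have hγΓ : γ ∈ Γ := (Quotient.out c : Γ).2
  -- p = γ⁻¹ • y
  have hpval : p = γ⁻¹ • y := by rw [← hpy, ← mul_smul]; simp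
  -- apply the key minimality lemma for the normal core
  have hx : x ∈ closure ((fun g : G => g • p) '' (N : Set G)) := aux_min hc hmin N x p hp
  -- the N-orbit of p is contained in the Γ-orbit of y
  have hsub : ((fun g : G => g • p) '' (N : Set G)) ⊆
      ((fun g : G => g • y) '' (Γ : Set G)) := by
    rintro _ ⟨n, hn, rfl⟩
    refine ⟨n * γ⁻¹, Γ.mul_mem (Γ.normalCore_le hn) (Γ.inv_mem hγΓ), ?_⟩
    show (n * γ⁻¹) • y = n • p
    rw [hpval, mul_smul]
  have hxy : x ∈ closure ((fun g : G => g • y) '' (Γ : Set G)) :=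
    closure_mono hsub hx
  -- conclude by Γ-invariance of the closure of Γ-orbits
  refine closure_minimal ?_ isClosed_closure
  rintro _ ⟨δ, hδ, rfl⟩
  exact smul_mem_cls hc Γ hδ hxy
end

section
/- Let G be a discrete finitely generated group acting by homeomorphisms on a compact metric space X, and let x ∈ X be a regularly recurrent point whose G-orbit is dense in X. Then for every closed neighborhood V of x there exists a finite-index subgroup Γ of G such that Γ ⊆ T_V(x), the orbit closure Ω_Γ(x) is clopen, for g, g' ∈ G one has g·Ω_Γ(x) = g'·Ω_Γ(x) if and only if g and g' lie in the same left coset of Γ, and the family {w·Ω_Γ(x) : w ∈ G/Γ} is a (finite) clopen partition of X. If moreover x is strongly regularly recurrent, then Γ can be chosen to be a normal subgroup of G. -/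
open Pointwise MeasureTheory

set_option linter.unusedSectionVars false

/-- The set of return times of `x` to `A`: `T_A(x) = {g ∈ G : g • x ∈ A}`. -/
def ReturnTimes (G : Type*) {X : Type*} [SMul G X] (x : X) (A : Set X) : Set G :=
  {g : G | g • x ∈ A}

/-- A point `x` is regularly recurrent if every open neighborhood of `x` contains the
`Γ`-orbit of `x` for some finite-index subgroup `Γ` of `G`. -/
def RegularlyRecurrent (G : Type*) {X : Type*} [Group G] [TopologicalSpace X] [MulAction G X]
    (x : X) : Prop :=
  ∀ V : Set X, IsOpen V → x ∈ V →
    ∃ Γ : Subgroup G, Γ.FiniteIndex ∧ (Γ : Set G) ⊆ ReturnTimes G x V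

/-- A point `x` is strongly regularly recurrent if every open neighborhood `V` of `x`
contains a clopen neighborhood `W` of `x` whose return-time set `T_W(x)` is a
finite-index normal subgroup of `G`. -/
def StronglyRegularlyRecurrent (G : Type*) {X : Type*} [Group G] [TopologicalSpace X]
    [MulAction G X] (x : X) : Prop :=
  ∀ V : Set X, IsOpen V → x ∈ V →
    ∃ W : Set X, IsClopen W ∧ x ∈ W ∧ W ⊆ V ∧
      ∃ Γ : Subgroup G, Γ.Normal ∧ Γ.FiniteIndex ∧ ReturnTimes G x W = (Γ : Set G)

/-- The conclusion of Lemma `existencia`: a finite-index subgroup `Γ ⊆ T_V(x)` such that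
the translates of the clopen set `Ω_Γ(x)` by the cosets of `Γ` form a clopen partition
of `X`. -/
def GoodPartition (G : Type*) {X : Type*} [Group G] [TopologicalSpace X] [MulAction G X]
    (x : X) (V : Set X) (Γ : Subgroup G) : Prop :=
  Γ.FiniteIndex ∧ (Γ : Set G) ⊆ ReturnTimes G x V ∧
    IsClopen (closure ((fun h : G => h • x) '' (Γ : Set G))) ∧
    (∀ g : G, IsClopen (g • closure ((fun h : G => h • x) '' (Γ : Set G)))) ∧
    (∀ g g' : G,
      g • closure ((fun h : G => h • x) '' (Γ : Set G))
        = g' • closure ((fun h : G => h • x) '' (Γ : Set G)) ↔ g⁻¹ * g' ∈ Γ) ∧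
    (∀ g g' : G, g⁻¹ * g' ∉ Γ →
      Disjoint (g • closure ((fun h : G => h • x) '' (Γ : Set G)))
        (g' • closure ((fun h : G => h • x) '' (Γ : Set G)))) ∧
    (⋃ g : G, g • closure ((fun h : G => h • x) '' (Γ : Set G))) = Set.univ

section Aux

variable {G X : Type*} [Group G] [MetricSpace X] [MulAction G X]

/-- The action of `g` as a homeomorphism of `X`. -/
def smulHomeo (hc : ∀ g : G, Continuous fun y : X => g • y) (g : G) : X ≃ₜ X where
  toFun := fun y => g • y
  invFun := fun y => g⁻¹ • y
  left_inv := fun y => inv_smul_smul g y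
  right_inv := fun y => smul_inv_smul g y
  continuous_toFun := hc g
  continuous_invFun := hc g⁻¹

lemma smul_closure (hc : ∀ g : G, Continuous fun y : X => g • y) (g : G) (S : Set X) :
    g • closure S = closure (g • S) := by
  have h := (smulHomeo hc g).image_closure S
  have h1 : (smulHomeo hc g) '' closure S = g • closure S := by
    ext z; simp [smulHomeo, Set.mem_smul_set]
  have h2 : (smulHomeo hc g) '' S = g • S := by
    ext z; simp [smulHomeo, Set.mem_smul_set]
  rw [h1, h2] at h
  exact h

lemma isClosed_smul (hc : ∀ g : G, Continuous fun y : X => g • y) {S : Set X}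
    (hS : IsClosed S) (g : G) : IsClosed (g • S) := by
  have h2 : (smulHomeo hc g) '' S = g • S := by
    ext z; simp [smulHomeo, Set.mem_smul_set]
  rw [← h2]
  exact ((smulHomeo hc g).isClosed_image).mpr hS

lemma isOpen_smul (hc : ∀ g : G, Continuous fun y : X => g • y) {S : Set X}
    (hS : IsOpen S) (g : G) : IsOpen (g • S) := by
  have h2 : (smulHomeo hc g) '' S = g • S := by
    ext z; simp [smulHomeo, Set.mem_smul_set]
  rw [← h2]
  exact ((smulHomeo hc g).isOpen_image).mpr hS

/-- `Ω_Γ(y)`, the closure of the `Γ`-orbit of `y`. -/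
def omegaSet (Γ : Subgroup G) (y : X) : Set X :=
  closure ((fun h : G => h • y) '' (Γ : Set G))

lemma mem_omegaSet_self (Γ : Subgroup G) (y : X) : y ∈ omegaSet Γ y :=
  subset_closure ⟨1, Γ.one_mem, one_smul G y⟩

lemma smul_image_orbit {Γ : Subgroup G} {γ : G} (hγ : γ ∈ Γ) (y : X) :
    γ • ((fun h : G => h • y) '' (Γ : Set G)) = (fun h : G => h • y) '' (Γ : Set G) := by
  ext z
  simp only [Set.mem_smul_set, Set.mem_image, SetLike.mem_coe]
  constructor
  · rintro ⟨-, ⟨h, hh, rfl⟩, rfl⟩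
    exact ⟨γ * h, Γ.mul_mem hγ hh, mul_smul γ h y⟩
  · rintro ⟨h, hh, rfl⟩
    exact ⟨(γ⁻¹ * h) • y, ⟨γ⁻¹ * h, Γ.mul_mem (Γ.inv_mem hγ) hh, rfl⟩, by
      rw [← mul_smul, mul_inv_cancel_left]⟩

lemma smul_omegaSet_of_mem (hc : ∀ g : G, Continuous fun y : X => g • y)
    {Γ : Subgroup G} {γ : G} (hγ : γ ∈ Γ) (y : X) :
    γ • omegaSet Γ y = omegaSet Γ y := by
  rw [omegaSet, smul_closure hc, smul_image_orbit hγ]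

lemma omegaSet_subset_of_mem (hc : ∀ g : G, Continuous fun y : X => g • y)
    {Γ : Subgroup G} {y z : X} (hz : z ∈ omegaSet Γ y) :
    omegaSet Γ z ⊆ omegaSet Γ y := by
  apply closure_minimal _ isClosed_closure
  rintro - ⟨h, hh, rfl⟩
  have : h • z ∈ h • omegaSet Γ y := ⟨z, hz, rfl⟩
  rwa [smul_omegaSet_of_mem hc hh] at this

lemma smul_omegaSet (hc : ∀ g : G, Continuous fun y : X => g • y)
    {Γ : Subgroup G} (hN : Γ.Normal) (g : G) (y : X) :
    g • omegaSet Γ y = omegaSet Γ (g • y) := by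
  rw [omegaSet, omegaSet, smul_closure hc]
  have himg : g • ((fun h : G => h • y) '' (Γ : Set G))
      = (fun h : G => h • (g • y)) '' (Γ : Set G) := by
    ext z
    simp only [Set.mem_smul_set, Set.mem_image, SetLike.mem_coe]
    constructor
    · rintro ⟨-, ⟨h, hh, rfl⟩, rfl⟩
      refine ⟨g * h * g⁻¹, hN.conj_mem h hh g, ?_⟩
      simp only [← mul_smul]
      group
    · rintro ⟨h, hh, rfl⟩
      refine ⟨(g⁻¹ * h * g) • y, ⟨g⁻¹ * h * g, by
        simpa using hN.conj_mem h hh g⁻¹, rfl⟩, ?_⟩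
      simp only [← mul_smul]
      group
  rw [himg]

variable [CompactSpace X]

/-- The key covering lemma: the orbit closure of `x` is covered by finitely many
`Γ`-translates of any closed neighborhood of `x`. -/
lemma minimality (hc : ∀ g : G, Continuous fun y : X => g • y)
    {x : X} (hrr : RegularlyRecurrent G x)
    {Γ : Subgroup G} (hfi : Γ.FiniteIndex)
    {y : X} (hy : y ∈ omegaSet Γ x) : omegaSet Γ y = omegaSet Γ x := by
  refine le_antisymm (omegaSet_subset_of_mem hc hy) ?_
  -- it suffices that `x ∈ omegaSet Γ y`
  suffices hx : x ∈ omegaSet Γ y by exact omegaSet_subset_of_mem hc hx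
  rw [omegaSet, mem_closure_iff_nhds_basis Metric.nhds_basis_closedBall]
  intro ε hε
  -- the closed ball is a closed neighborhood of x
  set C : Set X := Metric.closedBall x ε with hC
  have hCc : IsClosed C := Metric.isClosed_closedBall
  have hxC : x ∈ interior C := by
    rw [mem_interior_iff_mem_nhds]
    exact Metric.closedBall_mem_nhds x hε
  obtain ⟨Γ₂, hΓ₂fi, hΓ₂sub⟩ := hrr (interior C) isOpen_interior hxC
  haveI := hfi
  haveI := hΓ₂fi
  set Λ : Subgroup G := Γ ⊓ Γ₂ with hΛ
  haveI : Λ.FiniteIndex := by infer_instance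
  haveI : (Λ.subgroupOf Γ).FiniteIndex := Subgroup.instFiniteIndex_subgroupOf Λ Γ
  -- cover omegaSet Γ x by finitely many translates of C
  have hcover : omegaSet Γ x ⊆ ⋃ q : Γ ⧸ (Λ.subgroupOf Γ), ((Quotient.out q : Γ) : G) • C := by
    apply closure_minimal _ (isClosed_iUnion_of_finite fun q => isClosed_smul hc hCc _)
    rintro - ⟨γ, hγ, rfl⟩
    set γ' : Γ := ⟨γ, hγ⟩ with hγ'
    set q : Γ ⧸ (Λ.subgroupOf Γ) := QuotientGroup.mk γ' with hq
    set r : Γ := Quotient.out q with hr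
    have hrq : (QuotientGroup.mk r : Γ ⧸ (Λ.subgroupOf Γ)) = QuotientGroup.mk γ' := by
      rw [hr, hq]; exact QuotientGroup.out_eq' q
    have hmem : r⁻¹ * γ' ∈ Λ.subgroupOf Γ := QuotientGroup.eq.mp hrq
    have hmem2 : ((r⁻¹ * γ' : Γ) : G) ∈ Λ := hmem
    have hmem3 : ((r : G)⁻¹ * γ) ∈ Γ₂ := by
      have : ((r⁻¹ * γ' : Γ) : G) = (r : G)⁻¹ * γ := rfl
      rw [this] at hmem2
      exact (inf_le_right : Λ ≤ Γ₂) hmem2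
    have hx2 : ((r : G)⁻¹ * γ) • x ∈ C := interior_subset (hΓ₂sub hmem3)
    refine Set.mem_iUnion.mpr ⟨q, ?_⟩
    refine ⟨((r : G)⁻¹ * γ) • x, hx2, ?_⟩
    show (r : G) • ((r : G)⁻¹ * γ) • x = (fun h : G => h • x) γ
    rw [← mul_smul, mul_inv_cancel_left]
  obtain ⟨q, hq⟩ := Set.mem_iUnion.mp (hcover hy)
  set r : Γ := Quotient.out q
  obtain ⟨c, hc', hcy⟩ := hq
  refine ⟨(r : G)⁻¹ • y, ⟨(r : G)⁻¹, Γ.inv_mem r.2, rfl⟩, ?_⟩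
  rw [← hcy, inv_smul_smul]
  exact hc'

/-- Equal-or-disjoint dichotomy for translates of the orbit closure. -/
lemma eq_or_disjoint (hc : ∀ g : G, Continuous fun y : X => g • y)
    {x : X} (hrr : RegularlyRecurrent G x)
    {Γ : Subgroup G} (hN : Γ.Normal) (hfi : Γ.FiniteIndex) (g g' : G) :
    g • omegaSet Γ x = g' • omegaSet Γ x ∨
      Disjoint (g • omegaSet Γ x) (g' • omegaSet Γ x) := by
  set Ω := omegaSet Γ x with hΩ
  rcases Set.disjoint_or_nonempty_inter (g • Ω) (g' • Ω) with hd | ⟨z, hz1, hz2⟩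
  · exact Or.inr hd
  left
  set h := g⁻¹ * g' with hh
  have key : h • Ω = Ω := by
    set w := g⁻¹ • z with hw
    have hwΩ : w ∈ Ω := by
      obtain ⟨u, hu, rfl⟩ := hz1
      rwa [hw, inv_smul_smul]
    have hwhΩ : w ∈ h • Ω := by
      obtain ⟨u, hu, rfl⟩ := hz2
      refine ⟨u, hu, ?_⟩
      show (g⁻¹ * g') • u = g⁻¹ • (g' • u)
      rw [mul_smul]
    -- Ω ⊆ h • Ω
    have h1 : Ω ⊆ h • Ω := by
      have e1 : omegaSet Γ w = Ω := minimality hc hrr hfi hwΩ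
      have e2 : omegaSet Γ w ⊆ omegaSet Γ (h • x) := by
        apply omegaSet_subset_of_mem hc
        rwa [← smul_omegaSet hc hN]
      rw [e1, ← smul_omegaSet hc hN] at e2
      exact e2
    -- h • Ω ⊆ Ω
    have h2 : h • Ω ⊆ Ω := by
      have hw1 : h⁻¹ • w ∈ Ω := by
        obtain ⟨u, hu, huw⟩ := hwhΩ
        rw [← huw, inv_smul_smul]
        exact hu
      have hw2 : h⁻¹ • w ∈ h⁻¹ • Ω := ⟨w, hwΩ, rfl⟩
      have e1 : omegaSet Γ (h⁻¹ • w) = Ω := minimality hc hrr hfi hw1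
      have e2 : omegaSet Γ (h⁻¹ • w) ⊆ omegaSet Γ (h⁻¹ • x) := by
        apply omegaSet_subset_of_mem hc
        rwa [← smul_omegaSet hc hN]
      rw [e1, ← smul_omegaSet hc hN] at e2
      calc h • Ω ⊆ h • (h⁻¹ • Ω) := Set.smul_set_mono e2
        _ = Ω := smul_inv_smul h Ω
    exact le_antisymm h2 h1
  have : g' • Ω = g • (h • Ω) := by
    rw [hh, smul_smul, mul_inv_cancel_left]
  rw [this, key]

/-- The translates of the orbit closure cover `X`. -/
lemma cover_univ (hc : ∀ g : G, Continuous fun y : X => g • y)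
    {x : X} (hdense : Dense (Set.range fun g : G => g • x))
    {Γ : Subgroup G} (hfi : Γ.FiniteIndex) :
    (⋃ g : G, g • omegaSet Γ x) = Set.univ := by
  haveI := hfi
  apply Set.eq_univ_of_univ_subset
  have hclosed : IsClosed (⋃ q : G ⧸ Γ, Quotient.out q • omegaSet Γ x) :=
    isClosed_iUnion_of_finite fun q => isClosed_smul hc isClosed_closure _
  have hsub : Set.range (fun g : G => g • x) ⊆ ⋃ q : G ⧸ Γ, Quotient.out q • omegaSet Γ x := by
    rintro - ⟨g, rfl⟩
    set q : G ⧸ Γ := QuotientGroup.mk g with hq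
    set r : G := Quotient.out q with hr
    have hrq : (QuotientGroup.mk r : G ⧸ Γ) = QuotientGroup.mk g := QuotientGroup.out_eq' q
    have hmem : r⁻¹ * g ∈ Γ := QuotientGroup.eq.mp hrq
    refine Set.mem_iUnion.mpr ⟨q, ?_⟩
    refine ⟨(r⁻¹ * g) • x, subset_closure ⟨r⁻¹ * g, hmem, rfl⟩, ?_⟩
    show r • (r⁻¹ * g) • x = g • x
    rw [← mul_smul, mul_inv_cancel_left]
  calc Set.univ = closure (Set.range fun g : G => g • x) := (hdense.closure_eq).symm
    _ ⊆ ⋃ q : G ⧸ Γ, Quotient.out q • omegaSet Γ x := closure_minimal hsub hclosed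
    _ ⊆ ⋃ g : G, g • omegaSet Γ x := Set.iUnion_subset fun q =>
        Set.subset_iUnion (fun g : G => g • omegaSet Γ x) (Quotient.out q)

/-- The orbit closure is clopen. -/
lemma omega_isClopen (hc : ∀ g : G, Continuous fun y : X => g • y)
    {x : X} (hdense : Dense (Set.range fun g : G => g • x))
    (hrr : RegularlyRecurrent G x)
    {Γ : Subgroup G} (hN : Γ.Normal) (hfi : Γ.FiniteIndex) :
    IsClopen (omegaSet Γ x) := by
  haveI := hfi
  set Ω := omegaSet Γ x with hΩ
  refine ⟨isClosed_closure, ?_⟩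
  rw [← isClosed_compl_iff]
  have key : Ωᶜ = ⋃ q ∈ {q : G ⧸ Γ | ¬ Quotient.out q • Ω = Ω}, Quotient.out q • Ω := by
    apply Set.eq_of_subset_of_subset
    · intro y hy
      have hyuniv : y ∈ ⋃ g : G, g • Ω := by
        rw [cover_univ hc hdense hfi]; trivial
      obtain ⟨g, hg⟩ := Set.mem_iUnion.mp hyuniv
      set q : G ⧸ Γ := QuotientGroup.mk g with hq
      set r : G := Quotient.out q with hr
      have hrq : (QuotientGroup.mk r : G ⧸ Γ) = QuotientGroup.mk g := QuotientGroup.out_eq' q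
      have hmem : r⁻¹ * g ∈ Γ := QuotientGroup.eq.mp hrq
      have hgr : g • Ω = r • Ω := by
        have : g • Ω = r • ((r⁻¹ * g) • Ω) := by rw [smul_smul, mul_inv_cancel_left]
        rw [this, smul_omegaSet_of_mem hc hmem]
      rw [hgr] at hg
      have hne : ¬ r • Ω = Ω := fun he => hy (he ▸ hg)
      exact Set.mem_biUnion hne hg
    · intro y hy
      obtain ⟨q, hq, hyq⟩ := Set.mem_iUnion₂.mp hy
      rcases eq_or_disjoint hc hrr hN hfi (Quotient.out q) 1 with he | hd
      · rw [one_smul] at he; exact absurd he hq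
      · rw [one_smul] at hd
        exact fun hyΩ => Set.disjoint_left.mp hd hyq hyΩ
  rw [key]
  exact Set.Finite.isClosed_biUnion (Set.toFinite _)
    fun q _ => isClosed_smul hc isClosed_closure _

/-- Assembling a good partition from a normal finite-index subgroup `N` and a subgroup `Γ`
which is exactly the stabilizer of `Ω = Ω_N(x)` and has the same orbit closure. -/
lemma goodPartition_of (hc : ∀ g : G, Continuous fun y : X => g • y)
    {x : X} (hdense : Dense (Set.range fun g : G => g • x))
    (hrr : RegularlyRecurrent G x)
    {N Γ : Subgroup G} (hN : N.Normal) (hNfi : N.FiniteIndex)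
    (hΓfi : Γ.FiniteIndex)
    {V : Set X} (hΓV : (Γ : Set G) ⊆ ReturnTimes G x V)
    (heq : closure ((fun h : G => h • x) '' (Γ : Set G)) = omegaSet N x)
    (hstab : ∀ h : G, h • omegaSet N x = omegaSet N x ↔ h ∈ Γ) :
    GoodPartition G x V Γ := by
  set Ω := omegaSet N x with hΩ
  have hclopen : IsClopen Ω := omega_isClopen hc hdense hrr hN hNfi
  have hiff : ∀ g g' : G, g • Ω = g' • Ω ↔ g⁻¹ * g' ∈ Γ := by
    intro g g'
    constructor
    · intro he
      apply (hstab _).mp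
      rw [mul_smul, ← he, inv_smul_smul]
    · intro hm
      have h1 : (g⁻¹ * g') • Ω = Ω := (hstab _).mpr hm
      have h2 : g' • Ω = g • ((g⁻¹ * g') • Ω) := by rw [smul_smul, mul_inv_cancel_left]
      rw [h2, h1]
  refine ⟨hΓfi, hΓV, ?_, ?_, ?_, ?_, ?_⟩
  · rw [heq]; exact hclopen
  · intro g
    rw [heq]
    exact ⟨isClosed_smul hc hclopen.isClosed g, isOpen_smul hc hclopen.isOpen g⟩
  · intro g g'
    rw [heq]
    exact hiff g g'
  · intro g g' hm
    rw [heq]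
    rcases eq_or_disjoint hc hrr hN hNfi g g' with he | hd
    · exact absurd ((hiff g g').mp he) hm
    · exact hd
  · rw [heq]
    exact cover_univ hc hdense hNfi

end Aux

theorem statement5' {G X : Type*} [Group G] [MetricSpace X] [CompactSpace X]
    [MulAction G X]
    (hc : ∀ g : G, Continuous fun y : X => g • y)
    (x : X) (hdense : Dense (Set.range fun g : G => g • x))
    (hrr : RegularlyRecurrent G x) :
    (∀ V : Set X, IsClosed V → V ∈ nhds x → ∃ Γ : Subgroup G, GoodPartition G x V Γ) ∧
    (StronglyRegularlyRecurrent G x →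
      ∀ V : Set X, IsClosed V → V ∈ nhds x →
        ∃ Γ : Subgroup G, Γ.Normal ∧ GoodPartition G x V Γ) := by
  constructor
  · intro V hVclosed hVnhds
    have hxU : x ∈ interior V := mem_interior_iff_mem_nhds.mpr hVnhds
    obtain ⟨Γ₁, hΓ₁fi, hΓ₁sub⟩ := hrr (interior V) isOpen_interior hxU
    haveI := hΓ₁fi
    set N := Γ₁.normalCore with hNdef
    haveI hNfi : N.FiniteIndex := Subgroup.finiteIndex_normalCore Γ₁
    have hN : N.Normal := Subgroup.normalCore_normal Γ₁
    set Ω := omegaSet N x with hΩ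
    have himg : (fun h : G => h • x) '' (N : Set G) ⊆ V := by
      rintro - ⟨γ, hγ, rfl⟩
      exact interior_subset (hΓ₁sub (Subgroup.normalCore_le Γ₁ hγ))
    have hΩV : Ω ⊆ V := closure_minimal himg hVclosed
    set Γ' : Subgroup G := MulAction.stabilizer G Ω with hΓ'
    have hNle : N ≤ Γ' := fun γ hγ =>
      MulAction.mem_stabilizer_iff.mpr (smul_omegaSet_of_mem hc hγ x)
    haveI hΓ'fi : Γ'.FiniteIndex := Subgroup.finiteIndex_of_le hNle
    have hmemΩ : ∀ h : G, h ∈ Γ' → h • x ∈ Ω := by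
      intro h hh
      have : h • x ∈ h • Ω := ⟨x, mem_omegaSet_self N x, rfl⟩
      rwa [MulAction.mem_stabilizer_iff.mp hh] at this
    have hΓ'V : (Γ' : Set G) ⊆ ReturnTimes G x V := fun h hh => hΩV (hmemΩ h hh)
    have heq : closure ((fun h : G => h • x) '' (Γ' : Set G)) = Ω := by
      apply Set.eq_of_subset_of_subset
      · apply closure_minimal _ isClosed_closure
        rintro - ⟨h, hh, rfl⟩
        exact hmemΩ h hh
      · exact closure_mono (Set.image_mono hNle)
    refine ⟨Γ', goodPartition_of hc hdense hrr hN hNfi hΓ'fi hΓ'V heq ?_⟩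
    intro h
    exact MulAction.mem_stabilizer_iff.symm
  · intro hsrr V hVclosed hVnhds
    have hxU : x ∈ interior V := mem_interior_iff_mem_nhds.mpr hVnhds
    obtain ⟨W, hWclopen, hxW, hWU, Γ, hΓN, hΓfi, hTW⟩ :=
      hsrr (interior V) isOpen_interior hxU
    set Ω := omegaSet Γ x with hΩ
    have himg : (fun h : G => h • x) '' (Γ : Set G) ⊆ W := by
      rintro - ⟨γ, hγ, rfl⟩
      have : γ ∈ ReturnTimes G x W := by rw [hTW]; exact hγ
      exact this
    have hΩW : Ω ⊆ W := closure_minimal himg hWclopen.isClosed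
    have hstab : ∀ h : G, h • Ω = Ω ↔ h ∈ Γ := by
      intro h
      constructor
      · intro he
        have hx2 : h • x ∈ h • Ω := ⟨x, mem_omegaSet_self Γ x, rfl⟩
        rw [he] at hx2
        have : h ∈ ReturnTimes G x W := hΩW hx2
        rwa [hTW] at this
      · intro hm
        exact smul_omegaSet_of_mem hc hm x
    have hΓV : (Γ : Set G) ⊆ ReturnTimes G x V := by
      intro γ hγ
      have h1 : γ • x ∈ W := himg ⟨γ, hγ, rfl⟩
      show γ • x ∈ V
      exact interior_subset (hWU h1)
    exact ⟨Γ, hΓN, goodPartition_of hc hdense hrr hΓN hΓfi hΓfi hΓV rfl hstab⟩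

/-- Lemma `existencia`: for a (strongly) regularly recurrent point `x`
with dense orbit and any closed neighborhood `V` of `x`, there is a (normal) finite-index
subgroup `Γ ⊆ T_V(x)` whose orbit-closure translates clopenly partition `X`. -/
theorem statement5 {G X : Type*} [Group G] [Group.FG G] [MetricSpace X] [CompactSpace X]
    [MulAction G X]
    (hc : ∀ g : G, Continuous fun y : X => g • y)
    (x : X) (hdense : Dense (Set.range fun g : G => g • x))
    (hrr : RegularlyRecurrent G x) :
    (∀ V : Set X, IsClosed V → V ∈ nhds x → ∃ Γ : Subgroup G, GoodPartition G x V Γ) ∧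
    (StronglyRegularlyRecurrent G x →
      ∀ V : Set X, IsClosed V → V ∈ nhds x →
        ∃ Γ : Subgroup G, Γ.Normal ∧ GoodPartition G x V Γ) :=
  statement5' hc x hdense hrr
end

section
/- Let G be a discrete finitely generated group acting by homeomorphisms on a compact metric space X, and let x ∈ X be a point whose G-orbit is dense in X. Then x is regularly recurrent (respectively, strongly regularly recurrent) if and only if there exists a decreasing sequence (C_i)_{i≥0} of clopen neighborhoods of x with ⋂_{i≥0} C_i = {x} forming a fundamental system of neighborhoods of x, together with a decreasing sequence (Γ_i)_{i≥0} of finite-index (respectively, finite-index normal) subgroups of G, such that for every i ≥ 0 and every y ∈ C_i the set of return times T_{C_i}(y) equals Γ_i. -/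
open Pointwise MeasureTheory

/-- A fundamental system of clopen neighborhoods `(Cᵢ)` of `x` with `⋂ᵢ Cᵢ = {x}`,
together with a decreasing sequence `(Γᵢ)` of finite-index subgroups such that the return
times of every `y ∈ Cᵢ` to `Cᵢ` are exactly `Γᵢ`. -/
def FundamentalClopenSystem (G : Type*) {X : Type*} [Group G] [TopologicalSpace X]
    [MulAction G X] (x : X) (C : ℕ → Set X) (Γ : ℕ → Subgroup G) : Prop :=
  (∀ i, IsClopen (C i)) ∧ (∀ i, x ∈ C i) ∧ (∀ i, C (i + 1) ⊆ C i) ∧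
  (⋂ i, C i) = {x} ∧ (∀ V : Set X, IsOpen V → x ∈ V → ∃ i, C i ⊆ V) ∧
  (∀ i, Γ (i + 1) ≤ Γ i) ∧ (∀ i, (Γ i).FiniteIndex) ∧
  (∀ i, ∀ y ∈ C i, ReturnTimes G y (C i) = ((Γ i) : Set G))

section Aux

set_option linter.unusedSectionVars false

variable {G X : Type*} [Group G] [MetricSpace X] [MulAction G X]

open Metric

/-- The orbit of `x` under a subgroup, as a set. -/
def OrbSet (Γ : Subgroup G) (x : X) : Set X := (fun g => g • x) '' (Γ : Set G)

lemma mem_orbSet {Γ : Subgroup G} {x y : X} : y ∈ OrbSet Γ x ↔ ∃ g ∈ Γ, g • x = y := by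
  simp [OrbSet, Set.mem_image, SetLike.mem_coe]

lemma smul_mem_orbSet {Γ : Subgroup G} {g : G} (hg : g ∈ Γ) (x : X) :
    g • x ∈ OrbSet Γ x := mem_orbSet.mpr ⟨g, hg, rfl⟩

lemma self_mem_orbSet {Γ : Subgroup G} (x : X) : x ∈ OrbSet Γ x := by
  simpa using smul_mem_orbSet Γ.one_mem x

lemma orbSet_smul_self {Γ : Subgroup G} {γ : G} (hγ : γ ∈ Γ) (x : X) :
    OrbSet Γ (γ • x) = OrbSet Γ x := by
  ext y
  simp only [mem_orbSet]
  constructor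
  · rintro ⟨g, hg, rfl⟩
    exact ⟨g * γ, Γ.mul_mem hg hγ, (smul_smul g γ x).symm⟩
  · rintro ⟨g, hg, rfl⟩
    exact ⟨g * γ⁻¹, Γ.mul_mem hg (Γ.inv_mem hγ), by
      rw [smul_smul, mul_assoc, inv_mul_cancel, mul_one]⟩

lemma smul_orbSet {Γ : Subgroup G} (hN : Γ.Normal) (g : G) (x : X) :
    g • OrbSet Γ x = OrbSet Γ (g • x) := by
  ext y
  constructor
  · rintro ⟨z, hz, rfl⟩
    obtain ⟨γ, hγ, rfl⟩ := mem_orbSet.mp hz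
    refine mem_orbSet.mpr ⟨g * γ * g⁻¹, hN.conj_mem γ hγ g, ?_⟩
    show (g * γ * g⁻¹) • g • x = g • γ • x
    rw [smul_smul, mul_assoc, inv_mul_cancel, mul_one, mul_smul]
  · intro hy
    obtain ⟨γ, hγ, rfl⟩ := mem_orbSet.mp hy
    refine ⟨(g⁻¹ * γ * g) • x, mem_orbSet.mpr ⟨g⁻¹ * γ * g, by
      simpa using hN.conj_mem γ hγ g⁻¹, rfl⟩, ?_⟩
    show g • (g⁻¹ * γ * g) • x = γ • g • x
    rw [← mul_smul, ← mul_assoc, ← mul_assoc, mul_inv_cancel, one_mul, mul_smul]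

variable [ContinuousConstSMul G X]

lemma smul_closure_orbSet {Γ : Subgroup G} (hN : Γ.Normal) (g : G) (x : X) :
    g • closure (OrbSet Γ x) = closure (OrbSet Γ (g • x)) := by
  rw [← closure_smul, smul_orbSet hN]

lemma closure_orbSet_invariant {Γ : Subgroup G} (hN : Γ.Normal) {γ : G} (hγ : γ ∈ Γ) (x : X) :
    γ • closure (OrbSet Γ x) = closure (OrbSet Γ x) := by
  rw [smul_closure_orbSet hN, orbSet_smul_self hγ]

lemma smul_mem_closure_orbSet {Γ : Subgroup G} (hN : Γ.Normal) {γ : G} (hγ : γ ∈ Γ)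
    {x y : X} (hy : y ∈ closure (OrbSet Γ x)) : γ • y ∈ closure (OrbSet Γ x) := by
  rw [← closure_orbSet_invariant hN hγ x]
  exact Set.smul_mem_smul_set hy


lemma returns_near {x : X} (hrr : RegularlyRecurrent G x) {Γ₀ : Subgroup G}
    (hfi : Γ₀.FiniteIndex) {y : X} (hy : y ∈ closure (OrbSet Γ₀ x)) :
    x ∈ closure (OrbSet Γ₀ y) := by
  rw [_root_.mem_closure_iff]
  intro U hU hxU
  obtain ⟨δ, hδ, hball⟩ := Metric.isOpen_iff.mp hU x hxU
  obtain ⟨Λ, hΛfi, hΛ⟩ := hrr (Metric.ball x (δ/2)) Metric.isOpen_ball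
    (Metric.mem_ball_self (by linarith))
  haveI := hΛfi; haveI := hfi
  haveI : (Λ ⊓ Γ₀).FiniteIndex := inferInstance
  set K := Λ ⊓ Γ₀ with hKdef
  haveI : Finite (G ⧸ K) := Subgroup.finite_quotient_of_finiteIndex
  set S : Set (G ⧸ K) := (QuotientGroup.mk : G → G ⧸ K) '' (Γ₀ : Set G) with hSdef
  have claim1 : OrbSet Γ₀ x ⊆ ⋃ q ∈ S, (Quotient.out q) • Metric.ball x (δ/2) := by
    rintro _ ⟨g, hg, rfl⟩
    refine Set.mem_biUnion ⟨g, hg, rfl⟩ ?_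
    have hk : ((QuotientGroup.mk g : G ⧸ K).out)⁻¹ * g ∈ K :=
      QuotientGroup.eq.mp (QuotientGroup.out_eq' (QuotientGroup.mk g : G ⧸ K))
    have hball2 : (((QuotientGroup.mk g : G ⧸ K).out)⁻¹ * g) • x ∈ Metric.ball x (δ/2) :=
      hΛ (Subgroup.mem_inf.mp hk).1
    have : (QuotientGroup.mk g : G ⧸ K).out • ((((QuotientGroup.mk g : G ⧸ K).out)⁻¹ * g) • x)
        = g • x := by rw [smul_smul, mul_inv_cancel_left]
    show g • x ∈ _
    exact this ▸ Set.smul_mem_smul_set hball2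
  have hyU : y ∈ ⋃ q ∈ S, Quotient.out q • closure (Metric.ball x (δ/2)) := by
    have h2 : closure (OrbSet Γ₀ x)
        ⊆ closure (⋃ q ∈ S, Quotient.out q • Metric.ball x (δ/2)) := closure_mono claim1
    rw [S.toFinite.closure_biUnion] at h2
    have h4 := h2 hy
    simpa only [closure_smul] using h4
  obtain ⟨q, hqS, hyq⟩ := Set.mem_iUnion₂.mp hyU
  obtain ⟨γ, hγ, hmkγ⟩ := hqS
  have houtΓ : q.out ∈ Γ₀ := by
    have h5 : γ⁻¹ * q.out ∈ K :=
      QuotientGroup.eq.mp (hmkγ.trans (QuotientGroup.out_eq' q).symm)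
    have h6 : γ * (γ⁻¹ * q.out) ∈ Γ₀ := Γ₀.mul_mem hγ (Subgroup.mem_inf.mp h5).2
    rwa [mul_inv_cancel_left] at h6
  obtain ⟨w, hw, hwy⟩ := hyq
  have hz : q.out⁻¹ • y ∈ closure (Metric.ball x (δ/2)) := by
    rw [← hwy, inv_smul_smul]; exact hw
  have hzU : q.out⁻¹ • y ∈ U := by
    apply hball
    have := Metric.closure_ball_subset_closedBall hz
    rw [Metric.mem_closedBall] at this
    rw [Metric.mem_ball]
    linarith
  exact ⟨q.out⁻¹ • y, hzU, mem_orbSet.mpr ⟨q.out⁻¹, Γ₀.inv_mem houtΓ, rfl⟩⟩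

lemma closure_orbSet_eq {x : X} (hrr : RegularlyRecurrent G x) {Γ₀ : Subgroup G}
    (hN : Γ₀.Normal) (hfi : Γ₀.FiniteIndex) {z : X} (hz : z ∈ closure (OrbSet Γ₀ x)) :
    closure (OrbSet Γ₀ z) = closure (OrbSet Γ₀ x) := by
  apply subset_antisymm
  · apply closure_minimal _ isClosed_closure
    rintro _ ⟨γ, hγ, rfl⟩
    exact smul_mem_closure_orbSet hN hγ hz
  · have hx : x ∈ closure (OrbSet Γ₀ z) := returns_near hrr hfi hz
    apply closure_minimal _ isClosed_closure
    rintro _ ⟨γ, hγ, rfl⟩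
    exact smul_mem_closure_orbSet hN hγ hx

lemma smul_eq_or_disjoint {x : X} (hrr : RegularlyRecurrent G x) {Γ₀ : Subgroup G}
    (hN : Γ₀.Normal) (hfi : Γ₀.FiniteIndex) (g : G)
    (hne : ((g • closure (OrbSet Γ₀ x)) ∩ closure (OrbSet Γ₀ x)).Nonempty) :
    g • closure (OrbSet Γ₀ x) = closure (OrbSet Γ₀ x) := by
  obtain ⟨z, hz1, hz2⟩ := hne
  obtain ⟨w, hw, hwz⟩ := hz1
  have h1 : closure (OrbSet Γ₀ (g • w)) = g • closure (OrbSet Γ₀ x) := by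
    rw [← smul_closure_orbSet hN g w, closure_orbSet_eq hrr hN hfi hw]
  have hz2' : g • w ∈ closure (OrbSet Γ₀ x) := by
    show (fun x => g • x) w ∈ _
    rw [hwz]; exact hz2
  have h2 : closure (OrbSet Γ₀ (g • w)) = closure (OrbSet Γ₀ x) :=
    closure_orbSet_eq hrr hN hfi hz2'
  rw [← h1, h2]

lemma isClopen_closure_orbSet {x : X} (hdense : Dense (Set.range fun g : G => g • x))
    (hrr : RegularlyRecurrent G x) {Γ₀ : Subgroup G}
    (hN : Γ₀.Normal) (hfi : Γ₀.FiniteIndex) :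
    IsClopen (closure (OrbSet Γ₀ x)) := by
  set M := closure (OrbSet Γ₀ x) with hM
  haveI := hfi
  haveI : Finite (G ⧸ Γ₀) := Subgroup.finite_quotient_of_finiteIndex
  have hMclosed : IsClosed M := isClosed_closure
  have hcover : ∀ z : X, ∃ q : G ⧸ Γ₀, z ∈ Quotient.out q • M := by
    have hsub : Set.range (fun g : G => g • x) ⊆ ⋃ q : G ⧸ Γ₀, Quotient.out q • M := by
      rintro _ ⟨g, rfl⟩
      refine Set.mem_iUnion.mpr ⟨QuotientGroup.mk g, ?_⟩
      have hk : ((QuotientGroup.mk g : G ⧸ Γ₀).out)⁻¹ * g ∈ Γ₀ :=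
        QuotientGroup.eq.mp (QuotientGroup.out_eq' _)
      have heq : (QuotientGroup.mk g : G ⧸ Γ₀).out •
          ((((QuotientGroup.mk g : G ⧸ Γ₀).out)⁻¹ * g) • x) = g • x := by
        rw [smul_smul, mul_inv_cancel_left]
      show g • x ∈ _
      exact heq ▸ Set.smul_mem_smul_set (subset_closure (smul_mem_orbSet hk x))
    have hclosed : IsClosed (⋃ q : G ⧸ Γ₀, Quotient.out q • M) :=
      isClosed_iUnion_of_finite (fun q => hMclosed.smul _)
    intro z
    have h7 : closure (Set.range fun g : G => g • x) ⊆ ⋃ q : G ⧸ Γ₀, Quotient.out q • M :=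
      closure_minimal hsub hclosed
    rw [hdense.closure_eq] at h7
    exact Set.mem_iUnion.mp (h7 (Set.mem_univ z))
  refine ⟨hMclosed, ?_⟩
  set T : Set (G ⧸ Γ₀) := {q | ¬ ((Quotient.out q • M) ∩ M).Nonempty} with hT
  have hUclosed : IsClosed (⋃ q ∈ T, Quotient.out q • M) :=
    T.toFinite.isClosed_biUnion (fun q _ => hMclosed.smul _)
  have hMeq : M = (⋃ q ∈ T, Quotient.out q • M)ᶜ := by
    ext z
    simp only [Set.mem_compl_iff, Set.mem_iUnion₂]
    constructor
    · intro hzM ⟨q, hqT, hzq⟩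
      exact hqT ⟨z, hzq, hzM⟩
    · intro hz
      obtain ⟨q, hzq⟩ := hcover z
      by_cases hqT : q ∈ T
      · exact absurd ⟨q, hqT, hzq⟩ hz
      · have : Quotient.out q • M = M :=
          smul_eq_or_disjoint hrr hN hfi _ (not_not.mp hqT)
        rwa [this] at hzq
  rw [hMeq]
  exact hUclosed.isOpen_compl

lemma step_weak {x : X} (hdense : Dense (Set.range fun g : G => g • x))
    (hrr : RegularlyRecurrent G x) (V : Set X) (hV : IsOpen V) (hxV : x ∈ V) :
    ∃ (C : Set X) (Γ : Subgroup G), IsClopen C ∧ x ∈ C ∧ C ⊆ V ∧ Γ.FiniteIndex ∧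
      ∀ y ∈ C, ReturnTimes G y C = (Γ : Set G) := by
  obtain ⟨ε, hε, hball⟩ := Metric.isOpen_iff.mp hV x hxV
  obtain ⟨Λ, hΛfi, hΛ⟩ := hrr (Metric.ball x (ε/2)) Metric.isOpen_ball
    (Metric.mem_ball_self (by linarith))
  haveI := hΛfi
  set Γ₀ := Λ.normalCore with hΓ₀
  have hN : Γ₀.Normal := Subgroup.normalCore_normal Λ
  haveI hfi : Γ₀.FiniteIndex := Subgroup.finiteIndex_normalCore Λ
  set M := closure (OrbSet Γ₀ x) with hM
  have hxM : x ∈ M := subset_closure (self_mem_orbSet x)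
  have hMV : M ⊆ V := by
    have h1 : OrbSet Γ₀ x ⊆ Metric.ball x (ε/2) := by
      rintro _ ⟨g, hg, rfl⟩
      exact hΛ (Λ.normalCore_le hg)
    calc M ⊆ closure (Metric.ball x (ε/2)) := closure_mono h1
    _ ⊆ Metric.closedBall x (ε/2) := Metric.closure_ball_subset_closedBall
    _ ⊆ Metric.ball x ε := by
        intro z hz
        rw [Metric.mem_closedBall] at hz
        rw [Metric.mem_ball]
        linarith
    _ ⊆ V := hball
  have hle : Γ₀ ≤ MulAction.stabilizer G M := by
    intro γ hγ
    rw [MulAction.mem_stabilizer_iff]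
    exact closure_orbSet_invariant hN hγ x
  refine ⟨M, MulAction.stabilizer G M, isClopen_closure_orbSet hdense hrr hN hfi, hxM, hMV,
    Subgroup.finiteIndex_of_le hle, ?_⟩
  intro y hy
  ext g
  simp only [ReturnTimes, Set.mem_setOf_eq, SetLike.mem_coe, MulAction.mem_stabilizer_iff]
  constructor
  · intro hgy
    exact smul_eq_or_disjoint hrr hN hfi g ⟨g • y, Set.smul_mem_smul_set hy, hgy⟩
  · intro hgM
    rw [← hgM]
    exact Set.smul_mem_smul_set hy

lemma step_strong {x : X} (hdense : Dense (Set.range fun g : G => g • x))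
    (hsrr : StronglyRegularlyRecurrent G x) (V : Set X) (hV : IsOpen V) (hxV : x ∈ V) :
    ∃ (C : Set X) (Γ : Subgroup G), IsClopen C ∧ x ∈ C ∧ C ⊆ V ∧ Γ.FiniteIndex ∧ Γ.Normal ∧
      ∀ y ∈ C, ReturnTimes G y C = (Γ : Set G) := by
  obtain ⟨W, hWclopen, hxW, hWV, Γ, hN, hfi, hTW⟩ := hsrr V hV hxV
  have hmem : ∀ g : G, g • x ∈ W ↔ g ∈ Γ := by
    intro g
    rw [← SetLike.mem_coe, ← hTW]
    rfl
  have hWeq : W = closure (OrbSet Γ x) := by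
    apply subset_antisymm
    · intro y hy
      rw [_root_.mem_closure_iff]
      intro U hU hyU
      obtain ⟨z, hz, hz2⟩ := hdense.exists_mem_open (hU.inter hWclopen.isOpen) ⟨y, hyU, hy⟩
      obtain ⟨g, rfl⟩ := hz
      exact ⟨g • x, hz2.1, smul_mem_orbSet ((hmem g).mp hz2.2) x⟩
    · refine closure_minimal ?_ hWclopen.isClosed
      rintro _ ⟨g, hg, rfl⟩
      exact (hmem g).mpr hg
  refine ⟨W, Γ, hWclopen, hxW, hWV, hfi, hN, ?_⟩
  intro y hy
  have hy' : y ∈ closure (OrbSet Γ x) := by rwa [hWeq] at hy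
  ext g
  simp only [ReturnTimes, Set.mem_setOf_eq, SetLike.mem_coe]
  constructor
  · intro hgy
    have hgy' : g • y ∈ closure (OrbSet Γ (g • x)) := by
      rw [← smul_closure_orbSet hN]
      exact Set.smul_mem_smul_set hy'
    obtain ⟨z, hzW, hz⟩ := _root_.mem_closure_iff.mp hgy' W hWclopen.isOpen hgy
    obtain ⟨γ, hγ, rfl⟩ := mem_orbSet.mp hz
    have h8 : (γ * g) • x ∈ W := by rwa [mul_smul]
    have hγg : γ * g ∈ Γ := (hmem _).mp h8
    have h9 := Γ.mul_mem (Γ.inv_mem hγ) hγg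
    rwa [inv_mul_cancel_left] at h9
  · intro hg
    show g • y ∈ W
    rw [hWeq]
    exact smul_mem_closure_orbSet hN hg hy'

lemma dependent_rec {α : Type*} (Q : ℕ → α → Prop) (R : α → α → Prop)
    (h0 : ∃ a, Q 0 a) (hs : ∀ n a, Q n a → ∃ b, Q (n+1) b ∧ R a b) :
    ∃ f : ℕ → α, (∀ n, Q n (f n)) ∧ ∀ n, R (f n) (f (n+1)) := by
  choose b hb hr using hs
  let f : ∀ n : ℕ, {a // Q n a} := fun n =>
    Nat.rec ⟨h0.choose, h0.choose_spec⟩ (fun n p => ⟨b n p.1 p.2, hb n p.1 p.2⟩) n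
  exact ⟨fun n => (f n).1, fun n => (f n).2, fun n => hr n (f n).1 (f n).2⟩

lemma buildSystem {x : X} {P : Subgroup G → Prop}
    (step : ∀ V : Set X, IsOpen V → x ∈ V →
      ∃ (C : Set X) (Γ : Subgroup G), IsClopen C ∧ x ∈ C ∧ C ⊆ V ∧ Γ.FiniteIndex ∧ P Γ ∧
        ∀ y ∈ C, ReturnTimes G y C = (Γ : Set G)) :
    ∃ (C : ℕ → Set X) (Γ : ℕ → Subgroup G), (∀ i, P (Γ i)) ∧
      FundamentalClopenSystem G x C Γ := by
  set Q : ℕ → Set X × Subgroup G → Prop := fun n p =>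
    IsClopen p.1 ∧ x ∈ p.1 ∧ p.1 ⊆ Metric.ball x (1/((n : ℝ)+1)) ∧ p.2.FiniteIndex ∧ P p.2 ∧
      ∀ y ∈ p.1, ReturnTimes G y p.1 = (p.2 : Set G) with hQ
  have h0 : ∃ p, Q 0 p := by
    obtain ⟨C, Γ, h1, h2, h3, h4, h5, h6⟩ := step (Metric.ball x (1/((0 : ℕ)+1 : ℝ)))
      Metric.isOpen_ball (Metric.mem_ball_self (by norm_num))
    exact ⟨(C, Γ), h1, h2, h3, h4, h5, h6⟩
  have hs : ∀ n p, Q n p → ∃ p', Q (n+1) p' ∧ p'.1 ⊆ p.1 := by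
    intro n p hp
    obtain ⟨C, Γ, h1, h2, h3, h4, h5, h6⟩ := step (p.1 ∩ Metric.ball x (1/((n : ℝ)+1+1)))
      (hp.1.isOpen.inter Metric.isOpen_ball)
      ⟨hp.2.1, Metric.mem_ball_self (by positivity)⟩
    have hrad : Metric.ball x (1/((n : ℝ)+1+1)) = Metric.ball x (1/(((n+1 : ℕ) : ℝ)+1)) := by
      norm_num
    refine ⟨(C, Γ), ⟨h1, h2, ?_, h4, h5, h6⟩, fun y hy => (h3 hy).1⟩
    rw [← hrad]
    exact fun y hy => (h3 hy).2
  obtain ⟨f, hfQ, hfR⟩ := dependent_rec Q (fun p q => q.1 ⊆ p.1) h0 hs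
  have hmemx : ∀ n g, g ∈ (f n).2 ↔ g • x ∈ (f n).1 := by
    intro n g
    rw [← SetLike.mem_coe, ← (hfQ n).2.2.2.2.2 x (hfQ n).2.1]
    rfl
  refine ⟨fun n => (f n).1, fun n => (f n).2, fun n => (hfQ n).2.2.2.2.1,
    fun i => (hfQ i).1, fun i => (hfQ i).2.1, hfR, ?_, ?_, ?_,
    fun i => (hfQ i).2.2.2.1, fun i => (hfQ i).2.2.2.2.2⟩
  · ext z
    simp only [Set.mem_iInter, Set.mem_singleton_iff]
    constructor
    · intro hz
      by_contra hne
      have hd : 0 < dist z x := dist_pos.mpr hne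
      obtain ⟨n, hn⟩ := exists_nat_one_div_lt hd
      have := (hfQ n).2.2.1 (hz n)
      rw [Metric.mem_ball] at this
      linarith
    · rintro rfl
      exact fun i => (hfQ i).2.1
  · intro V hV hxV
    obtain ⟨ε, hε, hb⟩ := Metric.isOpen_iff.mp hV x hxV
    obtain ⟨n, hn⟩ := exists_nat_one_div_lt hε
    exact ⟨n, fun y hy => hb (Metric.ball_subset_ball hn.le ((hfQ n).2.2.1 hy))⟩
  · intro i g hg
    rw [hmemx] at hg ⊢
    exact hfR i hg

end Aux

/-- Corollary `caracterizacion`: a point `x` with dense orbit is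
(strongly) regularly recurrent iff it has a fundamental system of clopen neighborhoods
`(Cᵢ)` with `⋂ᵢ Cᵢ = {x}` whose return times are a decreasing sequence of finite-index
(normal) subgroups. -/
theorem statement6 {G X : Type*} [Group G] [Group.FG G] [MetricSpace X] [CompactSpace X]
    [MulAction G X]
    (hc : ∀ g : G, Continuous fun y : X => g • y)
    (x : X) (hdense : Dense (Set.range fun g : G => g • x)) :
    (RegularlyRecurrent G x ↔
      ∃ (C : ℕ → Set X) (Γ : ℕ → Subgroup G), FundamentalClopenSystem G x C Γ) ∧
    (StronglyRegularlyRecurrent G x ↔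
      ∃ (C : ℕ → Set X) (Γ : ℕ → Subgroup G),
        (∀ i, (Γ i).Normal) ∧ FundamentalClopenSystem G x C Γ) := by
  haveI : ContinuousConstSMul G X := ⟨hc⟩
  constructor
  · constructor
    · intro hrr
      obtain ⟨C, Γ, _, hF⟩ := buildSystem (x := x) (P := fun _ => True)
        (fun V hV hxV => by
          obtain ⟨C, Γ, h1, h2, h3, h4, h6⟩ := step_weak hdense hrr V hV hxV
          exact ⟨C, Γ, h1, h2, h3, h4, trivial, h6⟩)
      exact ⟨C, Γ, hF⟩
    · rintro ⟨C, Γ, hclopen, hmem, hmono, hinter, hfund, hΓmono, hfi, hret⟩ V hV hxV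
      obtain ⟨i, hi⟩ := hfund V hV hxV
      refine ⟨Γ i, hfi i, fun g hg => ?_⟩
      have hg' : g ∈ ReturnTimes G x (C i) := by rw [hret i x (hmem i)]; exact hg
      exact hi hg'
  · constructor
    · intro hsrr
      obtain ⟨C, Γ, hP, hF⟩ := buildSystem (x := x) (P := fun Γ : Subgroup G => Γ.Normal)
        (fun V hV hxV => by
          obtain ⟨C, Γ, h1, h2, h3, h4, h5, h6⟩ := step_strong hdense hsrr V hV hxV
          exact ⟨C, Γ, h1, h2, h3, h4, h5, h6⟩)
      exact ⟨C, Γ, hP, hF⟩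
    · rintro ⟨C, Γ, hN, hclopen, hmem, hmono, hinter, hfund, hΓmono, hfi, hret⟩ V hV hxV
      obtain ⟨i, hi⟩ := hfund V hV hxV
      exact ⟨C i, hclopen i, hmem i, hi, Γ i, hN i, hfi i, hret i x (hmem i)⟩
end

section
/- Let G be a discrete finitely generated group and let (X, G) be a minimal topological dynamical system. Then (X, G) is an almost 1-1 extension of a subodometer — i.e., there exist a decreasing sequence (Γ_i)_{i≥0} of finite-index subgroups of G and a factor map π : X → lim_{←i}(G/Γ_i, π_i) such that some point of the subodometer has exactly one π-preimage — if and only if X contains a regularly recurrent point. Moreover, for such an almost 1-1 factor map π, the set of regularly recurrent points of X is exactly the π-preimage of the set of points of the subodometer having exactly one π-preimage. -/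
open Pointwise MeasureTheory

lemma discreteQuot {G : Type*} [Group G] [TopologicalSpace G] [DiscreteTopology G]
    (Γ : Subgroup G) : DiscreteTopology (G ⧸ Γ) := by
  rw [discreteTopology_iff_isOpen_singleton]
  intro q
  have : IsOpen ((QuotientGroup.mk : G → G ⧸ Γ) ⁻¹' {q}) := isOpen_discrete _
  exact isOpen_coinduced.mpr this
set_option linter.unusedSectionVars false
section Machinery
variable {G X : Type*} [Group G] [TopologicalSpace X] [MulAction G X] [ContinuousConstSMul G X]

/-- The orbit of `x` under a subgroup, as a set. -/
def orb (Δ : Subgroup G) (x : X) : Set X := (fun g => g • x) '' (Δ : Set G)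

lemma mem_orb {Δ : Subgroup G} {x y : X} : y ∈ orb Δ x ↔ ∃ g ∈ Δ, g • x = y := by
  simp [orb]

lemma self_mem_orb (Δ : Subgroup G) (x : X) : x ∈ orb Δ x :=
  mem_orb.mpr ⟨1, Δ.one_mem, one_smul G x⟩

lemma smul_orb_subset {Δ : Subgroup G} {δ : G} (hδ : δ ∈ Δ) (x : X) :
    δ • orb Δ x ⊆ orb Δ x := by
  rintro y ⟨z, hz, rfl⟩
  obtain ⟨g, hg, rfl⟩ := mem_orb.mp hz
  exact mem_orb.mpr ⟨δ * g, Δ.mul_mem hδ hg, mul_smul δ g x⟩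

lemma smul_closure_orb {Δ : Subgroup G} {δ : G} (hδ : δ ∈ Δ) (x : X) :
    δ • closure (orb Δ x) = closure (orb Δ x) := by
  have h : ∀ γ ∈ Δ, γ • closure (orb Δ x) ⊆ closure (orb Δ x) := fun γ hγ => by
    rw [← closure_smul]
    exact closure_mono (smul_orb_subset hγ x)
  refine subset_antisymm (h δ hδ) ?_
  have := h δ⁻¹ (Δ.inv_mem hδ)
  calc closure (orb Δ x) = δ • δ⁻¹ • closure (orb Δ x) := by rw [smul_smul, mul_inv_cancel, one_smul]
  _ ⊆ δ • closure (orb Δ x) := Set.smul_set_mono this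

lemma orb_smul_comm {Δ : Subgroup G} (hN : Δ.Normal) (g : G) (x : X) :
    g • orb Δ x = orb Δ (g • x) := by
  ext y
  constructor
  · rintro ⟨z, hz, rfl⟩
    obtain ⟨δ, hδ, rfl⟩ := mem_orb.mp hz
    refine mem_orb.mpr ⟨g * δ * g⁻¹, hN.conj_mem δ hδ g, ?_⟩
    simp only [smul_smul]; congr 1; group
  · intro hy
    obtain ⟨δ, hδ, rfl⟩ := mem_orb.mp hy
    refine ⟨(g⁻¹ * δ * g) • x, mem_orb.mpr ⟨g⁻¹ * δ * g, ?_, rfl⟩, ?_⟩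
    · simpa using hN.conj_mem δ hδ g⁻¹
    · show g • _ = _
      simp only [smul_smul]; congr 1; group

lemma rr_smul {x : X} (hx : RegularlyRecurrent G x) (g : G) :
    RegularlyRecurrent G (g • x) := by
  intro V hV hgx
  have hV' : IsOpen ((fun y : X => g • y) ⁻¹' V) := hV.preimage (continuous_const_smul g)
  have hx' : x ∈ (fun y : X => g • y) ⁻¹' V := hgx
  obtain ⟨Γ, hΓfi, hΓ⟩ := hx _ hV' hx'
  refine ⟨Γ.comap (MulAut.conj g⁻¹).toMonoidHom, ?_, ?_⟩
  · constructor
    rw [Subgroup.index_comap_of_surjective _ (MulAut.conj g⁻¹).surjective]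
    exact hΓfi.index_ne_zero
  · intro h hh
    have hh' : g⁻¹ * h * g ∈ Γ := by
      simpa [MulAut.conj] using hh
    have := hΓ hh'
    simp only [ReturnTimes, Set.mem_setOf_eq, Set.mem_preimage] at this ⊢
    have e : h • g • x = g • ((g⁻¹ * h * g) • x) := by
      simp [smul_smul, mul_assoc]
    rw [e]
    exact this

end Machinery

section MachineryM
variable {G X : Type*} [Group G] [MetricSpace X] [MulAction G X] [ContinuousConstSMul G X]

lemma back_to_start {x : X} (hx : RegularlyRecurrent G x) (Δ : Subgroup G)
    {y : X} (hy : y ∈ closure (orb Δ x)) : x ∈ closure (orb Δ y) := by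
  rw [mem_closure_iff]
  intro V hV hxV
  obtain ⟨ε, hε, hball⟩ := Metric.nhds_basis_closedBall.mem_iff.mp (hV.mem_nhds hxV)
  obtain ⟨Γ, hΓfi, hΓ⟩ := hx (Metric.ball x ε) Metric.isOpen_ball (Metric.mem_ball_self hε)
  haveI := hΓfi
  haveI : Finite (Δ ⧸ (Γ.subgroupOf Δ)) := (Γ.subgroupOf Δ).finite_quotient_of_finiteIndex
  set Λ := Γ ⊓ Δ with hΛ
  -- the union of translates of `closure (orb Λ x)` by coset representatives
  set r : Δ ⧸ (Γ.subgroupOf Δ) → G := fun q => ((Quotient.out q : Δ) : G) with hr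
  set W : Set X := ⋃ q : Δ ⧸ (Γ.subgroupOf Δ), r q • closure (orb Λ x) with hW
  have hWclosed : IsClosed W :=
    isClosed_iUnion_of_finite fun q => isClosed_closure.smul (r q)
  have hsub : orb Δ x ⊆ W := by
    rintro z hz
    obtain ⟨δ, hδ, rfl⟩ := mem_orb.mp hz
    set q : Δ ⧸ (Γ.subgroupOf Δ) := QuotientGroup.mk ⟨δ, hδ⟩ with hq
    have hmem : (Quotient.out q)⁻¹ * ⟨δ, hδ⟩ ∈ Γ.subgroupOf Δ := by
      rw [← QuotientGroup.eq, QuotientGroup.out_eq']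
    rw [Subgroup.mem_subgroupOf] at hmem
    refine Set.mem_iUnion.mpr ⟨q, ?_⟩
    rw [Set.mem_smul_set_iff_inv_smul_mem]
    refine subset_closure (mem_orb.mpr ⟨(r q)⁻¹ * δ, ⟨hmem, ?_⟩, ?_⟩)
    · exact Δ.mul_mem (Δ.inv_mem (Quotient.out q).2) hδ
    · rw [mul_smul]
  have hyW : y ∈ W := by
    have : closure (orb Δ x) ⊆ W := closure_minimal hsub hWclosed
    exact this hy
  obtain ⟨q, hq⟩ := Set.mem_iUnion.mp hyW
  have hΛball : orb Λ x ⊆ Metric.ball x ε := by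
    rintro z hz
    obtain ⟨g, hg, rfl⟩ := mem_orb.mp hz
    exact hΓ hg.1
  have hcl : closure (orb Λ x) ⊆ Metric.closedBall x ε :=
    (closure_mono hΛball).trans Metric.closure_ball_subset_closedBall
  rw [Set.mem_smul_set_iff_inv_smul_mem] at hq
  refine ⟨(r q)⁻¹ • y, hball (hcl hq), ?_⟩
  exact mem_orb.mpr ⟨(r q)⁻¹, Δ.inv_mem (Quotient.out q).2, rfl⟩

lemma orbit_closure_min {x : X} (hx : RegularlyRecurrent G x) (Δ : Subgroup G)
    {y : X} (hy : y ∈ closure (orb Δ x)) : closure (orb Δ y) = closure (orb Δ x) := by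
  have inv : ∀ (w : X), ∀ z ∈ closure (orb Δ w), orb Δ z ⊆ closure (orb Δ w) := by
    rintro w z hz u hu
    obtain ⟨δ, hδ, rfl⟩ := mem_orb.mp hu
    have : δ • z ∈ δ • closure (orb Δ w) := Set.smul_mem_smul_set hz
    rwa [smul_closure_orb hδ] at this
  apply subset_antisymm
  · exact closure_minimal (inv x y hy) isClosed_closure
  · have hxy : x ∈ closure (orb Δ y) := back_to_start hx Δ hy
    exact closure_minimal (inv y x hxy) isClosed_closure

lemma translates_eq_or_disjoint {x : X} (hx : RegularlyRecurrent G x) (Δ : Subgroup G)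
    (hN : Δ.Normal) {g h : G}
    (hgh : ((g • closure (orb Δ x)) ∩ (h • closure (orb Δ x))).Nonempty) :
    g • closure (orb Δ x) = h • closure (orb Δ x) := by
  have key : ∀ k : G, k • closure (orb Δ x) = closure (orb Δ (k • x)) := fun k => by
    rw [← closure_smul, orb_smul_comm hN]
  obtain ⟨y, hy1, hy2⟩ := hgh
  rw [key] at hy1 hy2 ⊢
  rw [key]
  rw [← orbit_closure_min (rr_smul hx g) Δ hy1, ← orbit_closure_min (rr_smul hx h) Δ hy2]


lemma smul_translate_eq {x : X} (Δ : Subgroup G) {g h : G} (hgh : g⁻¹ * h ∈ Δ) :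
    g • closure (orb Δ x) = h • closure (orb Δ x) := by
  have : h • closure (orb Δ x) = g • ((g⁻¹ * h) • closure (orb Δ x)) := by
    simp [smul_smul]
  rw [this, smul_closure_orb hgh]

lemma translates_cover {x : X} (hmin : ∀ x : X, Dense (Set.range fun g : G => g • x))
    (Δ : Subgroup G) (hF : Δ.FiniteIndex) (y : X) :
    ∃ g : G, y ∈ g • closure (orb Δ x) := by
  haveI := hF
  set U : Set X := ⋃ q : G ⧸ Δ, Quotient.out q • closure (orb Δ x) with hU
  have hUclosed : IsClosed U :=
    isClosed_iUnion_of_finite fun q => isClosed_closure.smul _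
  have hrange : Set.range (fun g : G => g • x) ⊆ U := by
    rintro z ⟨g, rfl⟩
    refine Set.mem_iUnion.mpr ⟨QuotientGroup.mk g, ?_⟩
    have hmem : (Quotient.out (QuotientGroup.mk g : G ⧸ Δ))⁻¹ * g ∈ Δ := by
      rw [← QuotientGroup.eq, QuotientGroup.out_eq']
    rw [Set.mem_smul_set_iff_inv_smul_mem, smul_smul]
    exact subset_closure (mem_orb.mpr ⟨_, hmem, rfl⟩)
  have : y ∈ U := by
    have hd : closure (Set.range fun g : G => g • x) = Set.univ := (hmin x).closure_eq
    have : y ∈ closure (Set.range fun g : G => g • x) := by rw [hd]; trivial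
    exact closure_minimal hrange hUclosed this
  obtain ⟨q, hq⟩ := Set.mem_iUnion.mp this
  exact ⟨Quotient.out q, hq⟩

lemma translate_clopen {x : X} (hx : RegularlyRecurrent G x)
    (hmin : ∀ x : X, Dense (Set.range fun g : G => g • x))
    (Δ : Subgroup G) (hN : Δ.Normal) (hF : Δ.FiniteIndex) :
    IsClopen (closure (orb Δ x)) := by
  haveI := hF
  set Z := closure (orb Δ x) with hZ
  refine ⟨isClosed_closure, ?_⟩
  -- open: show the complement is a finite union of translates
  set T : Set X := ⋃ q ∈ {q : G ⧸ Δ | ¬ Quotient.out q • Z = Z}, Quotient.out q • Z with hT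
  have hTclosed : IsClosed T := by
    refine Set.Finite.isClosed_biUnion (Set.toFinite _) fun q _ => isClosed_closure.smul _
  have hcompl : Zᶜ = T := by
    ext y
    constructor
    · intro hy
      obtain ⟨g, hg⟩ := translates_cover hmin Δ hF y (x := x)
      have hmem : (Quotient.out (QuotientGroup.mk g : G ⧸ Δ))⁻¹ * g ∈ Δ := by
        rw [← QuotientGroup.eq, QuotientGroup.out_eq']
      have heq : Quotient.out (QuotientGroup.mk g : G ⧸ Δ) • Z = g • Z :=
        smul_translate_eq Δ hmem
      refine Set.mem_biUnion (show (QuotientGroup.mk g : G ⧸ Δ) ∈ _ from ?_) (heq ▸ hg)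
      intro hE
      rw [heq] at hE
      exact hy (hE ▸ hg)
    · intro hy hyZ
      obtain ⟨q, hq1, hq2⟩ := Set.mem_iUnion₂.mp hy
      apply hq1
      have : ((Quotient.out q • Z) ∩ ((1 : G) • Z)).Nonempty := ⟨y, hq2, by rwa [one_smul]⟩
      have := translates_eq_or_disjoint hx Δ hN this
      rwa [one_smul] at this
  have : IsOpen Zᶜᶜ := by
    rw [hcompl] at *
    exact hTclosed.isOpen_compl
  rwa [compl_compl] at this


lemma exists_good_subgroup {x : X} (hx : RegularlyRecurrent G x) {r : ℝ} (hr : 0 < r)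
    (Δ₀ : Subgroup G) (h0N : Δ₀.Normal) (h0F : Δ₀.FiniteIndex) :
    ∃ Δ : Subgroup G, Δ ≤ Δ₀ ∧ Δ.Normal ∧ Δ.FiniteIndex ∧
      (Δ : Set G) ⊆ ReturnTimes G x (Metric.closedBall x r) := by
  obtain ⟨Γ, hΓfi, hΓ⟩ := hx (Metric.ball x r) Metric.isOpen_ball (Metric.mem_ball_self hr)
  haveI := hΓfi
  haveI := h0F
  haveI := h0N
  refine ⟨Γ.normalCore ⊓ Δ₀, inf_le_right, inferInstance, inferInstance, ?_⟩
  intro g hg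
  have : g ∈ Γ := Γ.normalCore_le hg.1
  exact Metric.ball_subset_closedBall (hΓ this)

lemma smul_mem_closure_orb_iff {x : X} (hx : RegularlyRecurrent G x) (Δ : Subgroup G)
    (hN : Δ.Normal) (g : G) :
    g • x ∈ closure (orb Δ x) ↔ g • closure (orb Δ x) = closure (orb Δ x) := by
  have hxZ : x ∈ closure (orb Δ x) := subset_closure (self_mem_orb Δ x)
  constructor
  · intro h
    have h1 : g • x ∈ g • closure (orb Δ x) := Set.smul_mem_smul_set hxZ
    have h2 : g • x ∈ (1 : G) • closure (orb Δ x) := by rwa [one_smul]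
    have := translates_eq_or_disjoint hx Δ hN ⟨g • x, h1, h2⟩
    rwa [one_smul] at this
  · intro h
    rw [← h]
    exact Set.smul_mem_smul_set hxZ

end MachineryM

section Odo
variable {G : Type*} [Group G] [TopologicalSpace G] [DiscreteTopology G]

lemma stab_coset_finiteIndex {Γ : Subgroup G} (h : Γ.FiniteIndex) (q : G ⧸ Γ) :
    (MulAction.stabilizer G q).FiniteIndex := by
  have key : MulAction.stabilizer G q = Γ.comap (MulAut.conj (Quotient.out q)⁻¹).toMonoidHom := by
    ext g
    rw [MulAction.mem_stabilizer_iff, Subgroup.mem_comap]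
    set a := Quotient.out q with ha
    have hq : (QuotientGroup.mk a : G ⧸ Γ) = q := QuotientGroup.out_eq' q
    constructor
    · intro hg
      have : (QuotientGroup.mk (g * a) : G ⧸ Γ) = QuotientGroup.mk a := by
        rw [hq]
        rw [show (QuotientGroup.mk (g * a) : G ⧸ Γ) = g • QuotientGroup.mk a from rfl, hq, hg]
      have h2 : (g * a)⁻¹ * a ∈ Γ := QuotientGroup.eq.mp this
      have h3 : a⁻¹ * g⁻¹ * a ∈ Γ := by rw [mul_inv_rev] at h2; group at h2 ⊢; exact h2
      have h4 := Γ.inv_mem h3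
      simp only [MulAut.conj_apply, MulEquiv.coe_toMonoidHom]
      simpa [mul_assoc] using h4
    · intro hg
      simp only [MulAut.conj_apply, MulEquiv.coe_toMonoidHom] at hg
      have h3 : (g * a)⁻¹ * a ∈ Γ := by
        have := Γ.inv_mem hg
        simp only [mul_inv_rev, inv_inv] at this ⊢
        simpa [mul_assoc] using this
      have : (QuotientGroup.mk (g * a) : G ⧸ Γ) = QuotientGroup.mk a := QuotientGroup.eq.mpr h3
      calc g • q = g • QuotientGroup.mk a := by rw [hq]
      _ = QuotientGroup.mk (g * a) := rfl
      _ = QuotientGroup.mk a := this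
      _ = q := hq
  constructor
  rw [key, Subgroup.index_comap_of_surjective _ (MulAut.conj (Quotient.out q)⁻¹).surjective]
  exact h.index_ne_zero

end Odo



section Odo2
variable {G : Type*} [Group G] [TopologicalSpace G] [DiscreteTopology G] {Γ : ℕ → Subgroup G}

lemma subod_eq_below {v w : Subodometer Γ} :
    ∀ (k i : ℕ), v.1 (i + k) = w.1 (i + k) → v.1 i = w.1 i := by
  intro k
  induction k with
  | zero => intro i h; exact h
  | succ k ih =>
    intro i h
    apply ih
    set g := Quotient.out (v.1 (i + k + 1)) with hg
    have h1 : (QuotientGroup.mk g : G ⧸ Γ (i + k + 1)) = v.1 (i + k + 1) :=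
      QuotientGroup.out_eq' _
    have h2 : (QuotientGroup.mk g : G ⧸ Γ (i + k + 1)) = w.1 (i + k + 1) := by
      rw [h1]; exact h
    have hv' := v.2 (i + k) g h1
    have hw' := w.2 (i + k) g h2
    rw [← hv', hw']

lemma subod_eq_le {v w : Subodometer Γ} {i j : ℕ} (hij : i ≤ j) (h : v.1 j = w.1 j) :
    v.1 i = w.1 i := by
  obtain ⟨k, rfl⟩ := Nat.exists_eq_add_of_le hij
  exact subod_eq_below k i h

lemma subod_eval_continuous (n : ℕ) :
    Continuous (fun v : Subodometer Γ => v.1 n) :=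
  (continuous_apply n).comp continuous_subtype_val

lemma subod_cyl_isClopen (n : ℕ) (q : G ⧸ Γ n) :
    IsClopen {v : Subodometer Γ | v.1 n = q} := by
  haveI := discreteQuot (Γ n)
  have : IsClopen ({q} : Set (G ⧸ Γ n)) := isClopen_discrete _
  exact this.preimage (subod_eval_continuous n)

lemma subod_cyl_subset_of_open {U : Set (Subodometer Γ)} (hU : IsOpen U)
    {w : Subodometer Γ} (hw : w ∈ U) :
    ∃ n, {v : Subodometer Γ | v.1 n = w.1 n} ⊆ U := by
  obtain ⟨V, hV, rfl⟩ := isOpen_induced_iff.mp hU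
  obtain ⟨I, u, h1, h2⟩ := isOpen_pi_iff.mp hV w.1 hw
  refine ⟨I.sup id, fun v hv => ?_⟩
  refine h2 fun a ha => ?_
  have hale : a ≤ I.sup id := Finset.le_sup (f := id) ha
  have : v.1 a = w.1 a := subod_eq_le hale hv
  rw [this]
  exact (h1 a ha).2

lemma subod_orbit_dense (v w : Subodometer Γ) (n : ℕ) :
    ∃ g : G, (g • v).1 n = w.1 n := by
  obtain ⟨a, ha⟩ : ∃ a : G, (QuotientGroup.mk a : G ⧸ Γ n) = v.1 n := ⟨_, QuotientGroup.out_eq' _⟩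
  obtain ⟨b, hb⟩ : ∃ b : G, (QuotientGroup.mk b : G ⧸ Γ n) = w.1 n := ⟨_, QuotientGroup.out_eq' _⟩
  refine ⟨b * a⁻¹, ?_⟩
  show (b * a⁻¹) • v.1 n = w.1 n
  rw [← ha, ← hb]
  rw [show ((b * a⁻¹) • (QuotientGroup.mk a : G ⧸ Γ n))
      = QuotientGroup.mk (b * a⁻¹ * a) from rfl, inv_mul_cancel_right]

end Odo2


section Odo3
variable {G X : Type*} [Group G] [TopologicalSpace G] [DiscreteTopology G]
  [MetricSpace X] [CompactSpace X] [MulAction G X] {Γ : ℕ → Subgroup G}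

lemma fiber_shrink {π : X → Subodometer Γ} (hπc : Continuous π) {y₀ : Subodometer Γ} {x₀ : X}
    (hufib : ∀ z, π z = y₀ → z = x₀) {V : Set X} (hV : IsOpen V) (hx₀V : x₀ ∈ V) :
    ∃ n, π ⁻¹' {v : Subodometer Γ | v.1 n = y₀.1 n} ⊆ V := by
  by_contra hcon
  push_neg at hcon
  set K : ℕ → Set X := fun n => π ⁻¹' {v : Subodometer Γ | v.1 n = y₀.1 n} ∩ Vᶜ with hK
  have hKcl : ∀ n, IsClosed (K n) := fun n =>
    (((subod_cyl_isClopen n (y₀.1 n)).preimage hπc).1).inter hV.isClosed_compl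
  have hKdec : ∀ n, K (n + 1) ⊆ K n := by
    intro n
    apply Set.inter_subset_inter_left
    intro z hz
    exact subod_eq_le (Nat.le_succ n) hz
  have hKne : ∀ n, (K n).Nonempty := by
    intro n
    obtain ⟨z, hz1, hz2⟩ := Set.not_subset.mp (hcon n)
    exact ⟨z, hz1, hz2⟩
  obtain ⟨z, hz⟩ := IsCompact.nonempty_iInter_of_sequence_nonempty_isCompact_isClosed K hKdec
    hKne (hKcl 0).isCompact hKcl
  have hz' : ∀ n, z ∈ K n := Set.mem_iInter.mp hz
  have hπz : π z = y₀ := Subtype.ext (funext fun n => (hz' n).1)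
  exact (hz' 0).2 (hufib z hπz ▸ hx₀V)

variable [ContinuousConstSMul G X]

lemma rr_of_unique_fiber (hfi : ∀ i, (Γ i).FiniteIndex)
    {π : X → Subodometer Γ} (hπ : IsFactorMap G π) {x : X}
    (hufib : ∀ z, π z = π x → z = x) : RegularlyRecurrent G x := by
  intro V hV hxV
  obtain ⟨n, hn⟩ := fiber_shrink hπ.1 hufib hV hxV
  refine ⟨MulAction.stabilizer G ((π x).1 n), stab_coset_finiteIndex (hfi n) _, ?_⟩
  intro g hg
  show g • x ∈ V
  apply hn
  show π (g • x) ∈ {v : Subodometer Γ | v.1 n = (π x).1 n}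
  rw [hπ.2.2 g x]
  show (g • π x).1 n = (π x).1 n
  exact MulAction.mem_stabilizer_iff.mp hg

lemma unique_fiber_of_rr (hmin : ∀ x : X, Dense (Set.range fun g : G => g • x))
    {π : X → Subodometer Γ} (hπ : IsFactorMap G π)
    (hsing : ∃ y₀ : Subodometer Γ, ∃! z : X, π z = y₀)
    {x : X} (hx : RegularlyRecurrent G x) : ∀ z, π z = π x → z = x := by
  intro z hz
  refine eq_of_forall_dist_le fun ε hε => ?_
  obtain ⟨Δ, -, hN, hF, hret⟩ := exists_good_subgroup hx (half_pos hε) ⊤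
    inferInstance inferInstance
  set Z := closure (orb Δ x) with hZdef
  have hZball : Z ⊆ Metric.closedBall x (ε / 2) := by
    apply closure_minimal ?_ Metric.isClosed_closedBall
    intro u hu
    obtain ⟨g, hg, rfl⟩ := mem_orb.mp hu
    exact hret hg
  have hclopen : IsClopen Z := translate_clopen hx hmin Δ hN hF
  obtain ⟨y₀, x₀, hx₀, huniq⟩ := hsing
  obtain ⟨h₀, hh₀⟩ := translates_cover hmin Δ hF x₀ (x := x)
  have hopen : IsOpen (h₀ • Z) := hclopen.2.smul h₀
  obtain ⟨δ, hδpos, hδ⟩ := Metric.isOpen_iff.mp hopen x₀ hh₀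
  have hufib : ∀ w, π w = y₀ → w = x₀ := fun w hw => huniq w hw
  obtain ⟨n, hn⟩ := fiber_shrink hπ.1 hufib Metric.isOpen_ball (Metric.mem_ball_self hδpos)
  obtain ⟨g, hg⟩ := subod_orbit_dense (π x) y₀ n
  have h1 : π (g • x) ∈ {v : Subodometer Γ | v.1 n = y₀.1 n} := by
    rw [hπ.2.2]; exact hg
  have h2 : π (g • z) ∈ {v : Subodometer Γ | v.1 n = y₀.1 n} := by
    rw [hπ.2.2, hz]; exact hg
  have hgx : g • x ∈ h₀ • Z := hδ (hn h1)
  have hgz : g • z ∈ h₀ • Z := hδ (hn h2)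
  have hgx2 : g • x ∈ g • Z := Set.smul_mem_smul_set (subset_closure (self_mem_orb Δ x))
  have heq : h₀ • Z = g • Z := translates_eq_or_disjoint hx Δ hN ⟨g • x, hgx, hgx2⟩
  have hzZ : z ∈ Z := by
    have : g • z ∈ g • Z := heq ▸ hgz
    rwa [Set.smul_mem_smul_set_iff] at this
  have := Metric.mem_closedBall.mp (hZball hzZ)
  linarith

lemma construction (hmin : ∀ x : X, Dense (Set.range fun g : G => g • x))
    {x : X} (hx : RegularlyRecurrent G x) :
    ∃ Γ : ℕ → Subgroup G, (∀ i, (Γ i).FiniteIndex) ∧ (∀ i, Γ (i + 1) ≤ Γ i) ∧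
      ∃ π : X → Subodometer Γ, IsFactorMap G π ∧ ∃ y : Subodometer Γ, ∃! z : X, π z = y := by
  have hstep : ∀ (i : ℕ) (p : {Δ : Subgroup G // Δ.Normal ∧ Δ.FiniteIndex}),
      ∃ Δ : Subgroup G, Δ ≤ p.1 ∧ Δ.Normal ∧ Δ.FiniteIndex ∧
        (Δ : Set G) ⊆ ReturnTimes G x (Metric.closedBall x (1 / (i + 1))) := by
    intro i p
    have hpos : (0 : ℝ) < 1 / (i + 1) := by positivity
    exact exists_good_subgroup hx hpos p.1 p.2.1 p.2.2
  choose F hF1 hF2 hF3 hF4 using hstep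
  let f : ℕ → {Δ : Subgroup G // Δ.Normal ∧ Δ.FiniteIndex} := fun n =>
    Nat.rec ⟨F 0 ⟨⊤, inferInstance, inferInstance⟩, hF2 0 _, hF3 0 _⟩
      (fun i p => ⟨F (i + 1) p, hF2 (i + 1) p, hF3 (i + 1) p⟩) n
  set Δs : ℕ → Subgroup G := fun i => (f i).1 with hΔs
  have hN : ∀ i, (Δs i).Normal := fun i => (f i).2.1
  have hFI : ∀ i, (Δs i).FiniteIndex := fun i => (f i).2.2
  have hdec : ∀ i, Δs (i + 1) ≤ Δs i := fun i => hF1 (i + 1) (f i)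
  have hret : ∀ i, (Δs i : Set G) ⊆ ReturnTimes G x (Metric.closedBall x (1 / (i + 1))) := by
    intro i
    cases i with
    | zero => exact hF4 0 _
    | succ i => exact hF4 (i + 1) (f i)
  set Z : ℕ → Set X := fun i => closure (orb (Δs i) x) with hZdef
  have hxZ : ∀ i, x ∈ Z i := fun i => subset_closure (self_mem_orb _ x)
  have hZball : ∀ i, Z i ⊆ Metric.closedBall x (1 / (i + 1)) := by
    intro i
    apply closure_minimal ?_ Metric.isClosed_closedBall
    intro u hu
    obtain ⟨g, hg, rfl⟩ := mem_orb.mp hu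
    exact hret i hg
  have hZmono : ∀ i, Z (i + 1) ⊆ Z i := fun i =>
    closure_mono (Set.image_mono (fun g hg => hdec i hg))
  have hZclopen : ∀ i, IsClopen (Z i) := fun i => translate_clopen hx hmin _ (hN i) (hFI i)
  set Γs : ℕ → Subgroup G := fun i => MulAction.stabilizer G (Z i) with hΓs
  have hΔΓ : ∀ i, Δs i ≤ Γs i := fun i δ hδ =>
    MulAction.mem_stabilizer_iff.mpr (smul_closure_orb hδ x)
  have hΓfi : ∀ i, (Γs i).FiniteIndex := by
    intro i
    haveI := hFI i
    exact Subgroup.finiteIndex_of_le (hΔΓ i)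
  have hΓdec : ∀ i, Γs (i + 1) ≤ Γs i := by
    intro i g hg
    have hgx : g • x ∈ Z (i + 1) := by
      have h1 : g • x ∈ g • Z (i + 1) := Set.smul_mem_smul_set (hxZ (i + 1))
      rwa [MulAction.mem_stabilizer_iff.mp hg] at h1
    have : g • x ∈ Z i := hZmono i hgx
    exact MulAction.mem_stabilizer_iff.mpr
      ((smul_mem_closure_orb_iff hx _ (hN i) g).mp this)
  have hcov : ∀ (i : ℕ) (y : X), ∃ g : G, y ∈ g • Z i := fun i y =>
    translates_cover hmin _ (hFI i) y
  choose sel hsel using hcov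
  have hchar : ∀ (i : ℕ) (y : X) (g : G),
      ((QuotientGroup.mk (sel i y) : G ⧸ Γs i) = QuotientGroup.mk g) ↔ y ∈ g • Z i := by
    intro i y g
    constructor
    · intro h
      have hmem : (sel i y)⁻¹ * g ∈ Γs i := QuotientGroup.eq.mp h
      have h2 : ((sel i y)⁻¹ * g) • Z i = Z i := MulAction.mem_stabilizer_iff.mp hmem
      have : g • Z i = sel i y • Z i := by
        calc g • Z i = sel i y • (((sel i y)⁻¹ * g) • Z i) := by
              rw [smul_smul, mul_inv_cancel_left]
        _ = sel i y • Z i := by rw [h2]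
      rw [this]
      exact hsel i y
    · intro h
      have heq : g • Z i = sel i y • Z i :=
        translates_eq_or_disjoint hx _ (hN i) ⟨y, h, hsel i y⟩
      refine QuotientGroup.eq.mpr (MulAction.mem_stabilizer_iff.mpr ?_)
      rw [mul_smul, heq, smul_smul, inv_mul_cancel, one_smul]
  have hcompat : ∀ y : X, Compat Γs (fun i => QuotientGroup.mk (sel i y)) := by
    intro y i g hg
    have h1 : y ∈ g • Z (i + 1) := (hchar (i + 1) y g).mp hg.symm
    have h2 : y ∈ g • Z i := Set.smul_set_mono (hZmono i) h1
    exact ((hchar i y g).mpr h2).symm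
  set π : X → Subodometer Γs :=
    fun y => ⟨fun i => QuotientGroup.mk (sel i y), hcompat y⟩ with hπdef
  refine ⟨Γs, hΓfi, hΓdec, π, ⟨?_, ?_, ?_⟩, π x, x, rfl, ?_⟩
  · -- continuity
    refine Continuous.subtype_mk (continuous_pi fun i => ?_) _
    haveI := discreteQuot (Γs i)
    rw [continuous_discrete_rng]
    intro q
    obtain ⟨g, hgq⟩ : ∃ g : G, (QuotientGroup.mk g : G ⧸ Γs i) = q :=
      ⟨Quotient.out q, QuotientGroup.out_eq' q⟩
    have : (fun y : X => (QuotientGroup.mk (sel i y) : G ⧸ Γs i)) ⁻¹' {q} = g • Z i := by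
      ext y
      simp only [Set.mem_preimage, Set.mem_singleton_iff, ← hgq]
      exact hchar i y g
    rw [this]
    exact (hZclopen i).2.smul g
  · -- surjectivity
    intro w
    set gseq : ℕ → G := fun i => Quotient.out (w.1 i) with hgseq
    have hgw : ∀ i, (QuotientGroup.mk (gseq i) : G ⧸ Γs i) = w.1 i := fun i =>
      QuotientGroup.out_eq' _
    have hkey : ∀ i, (QuotientGroup.mk (gseq (i + 1)) : G ⧸ Γs i) = w.1 i := fun i =>
      w.2 i (gseq (i + 1)) (hgw (i + 1))
    set C : ℕ → Set X := fun i => gseq i • Z i with hC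
    have hCne : ∀ i, (C i).Nonempty := fun i => ⟨gseq i • x, Set.smul_mem_smul_set (hxZ i)⟩
    have hCcl : ∀ i, IsClosed (C i) := fun i => (hZclopen i).1.smul _
    have hCdec : ∀ i, C (i + 1) ⊆ C i := by
      intro i
      have hmem : (gseq i)⁻¹ * gseq (i + 1) ∈ Γs i :=
        QuotientGroup.eq.mp ((hgw i).trans (hkey i).symm)
      have h2 : ((gseq i)⁻¹ * gseq (i + 1)) • Z i = Z i := MulAction.mem_stabilizer_iff.mp hmem
      have heq : gseq (i + 1) • Z i = gseq i • Z i := by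
        calc gseq (i + 1) • Z i = gseq i • (((gseq i)⁻¹ * gseq (i + 1)) • Z i) := by
              rw [smul_smul, mul_inv_cancel_left]
        _ = gseq i • Z i := by rw [h2]
      calc C (i + 1) = gseq (i + 1) • Z (i + 1) := rfl
      _ ⊆ gseq (i + 1) • Z i := Set.smul_set_mono (hZmono i)
      _ = gseq i • Z i := heq
    obtain ⟨y, hy⟩ := IsCompact.nonempty_iInter_of_sequence_nonempty_isCompact_isClosed C hCdec
      hCne (hCcl 0).isCompact hCcl
    refine ⟨y, Subtype.ext (funext fun i => ?_)⟩
    have hyC : y ∈ C i := Set.mem_iInter.mp hy i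
    exact ((hchar i y (gseq i)).mpr hyC).trans (hgw i)
  · -- equivariance
    intro g y
    apply Subtype.ext
    funext i
    show (QuotientGroup.mk (sel i (g • y)) : G ⧸ Γs i) = g • QuotientGroup.mk (sel i y)
    have h1 : y ∈ sel i y • Z i := hsel i y
    have h2 : g • y ∈ (g * sel i y) • Z i := by
      rw [mul_smul]
      exact Set.smul_mem_smul_set h1
    rw [(hchar i (g • y) (g * sel i y)).mpr h2]
    rfl
  · -- unique fiber over π x
    intro w hw
    have hxcoord : ∀ i, (QuotientGroup.mk (sel i x) : G ⧸ Γs i) = QuotientGroup.mk 1 :=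
      fun i => (hchar i x 1).mpr (by rw [one_smul]; exact hxZ i)
    have hwZ : ∀ i, w ∈ Z i := by
      intro i
      have hcoord : (QuotientGroup.mk (sel i w) : G ⧸ Γs i) = QuotientGroup.mk (sel i x) :=
        congrFun (congrArg Subtype.val hw) i
      have h2 : (QuotientGroup.mk (sel i w) : G ⧸ Γs i) = QuotientGroup.mk 1 :=
        hcoord.trans (hxcoord i)
      have := (hchar i w 1).mp h2
      rwa [one_smul] at this
    refine eq_of_forall_dist_le fun ε hε => ?_
    obtain ⟨n, hn⟩ := exists_nat_one_div_lt hε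
    have := Metric.mem_closedBall.mp (hZball n (hwZ n))
    have hle : (1 : ℝ) / (n + 1) < ε := hn
    linarith

end Odo3

/-- Theorem `almost`, subodometer case: a minimal system `(X, G)` is an
almost 1-1 extension of a subodometer iff it has a regularly recurrent point; and for any
such almost 1-1 factor map, the regularly recurrent points are exactly the preimages of
the points with a single preimage. -/
theorem statement7 {G X : Type*} [Group G] [Group.FG G] [TopologicalSpace G]
    [DiscreteTopology G] [MetricSpace X] [CompactSpace X] [MulAction G X]
    (hc : ∀ g : G, Continuous fun x : X => g • x)
    (hmin : ∀ x : X, Dense (Set.range fun g : G => g • x)) :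
    ((∃ Γ : ℕ → Subgroup G, (∀ i, (Γ i).FiniteIndex) ∧ (∀ i, Γ (i + 1) ≤ Γ i) ∧
        ∃ π : X → Subodometer Γ, IsFactorMap G π ∧ ∃ y : Subodometer Γ, ∃! z : X, π z = y)
      ↔ ∃ x : X, RegularlyRecurrent G x) ∧
    (∀ Γ : ℕ → Subgroup G, (∀ i, (Γ i).FiniteIndex) → (∀ i, Γ (i + 1) ≤ Γ i) →
      ∀ π : X → Subodometer Γ, IsFactorMap G π → (∃ y : Subodometer Γ, ∃! z : X, π z = y) →
        {x : X | RegularlyRecurrent G x}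
          = π ⁻¹' {y : Subodometer Γ | ∃! z : X, π z = y}) := by
  haveI : ContinuousConstSMul G X := ⟨hc⟩
  constructor
  · constructor
    · rintro ⟨Γ, hfi, hdec, π, hπ, y₀, x₀, hx₀, huniq⟩
      refine ⟨x₀, rr_of_unique_fiber hfi hπ fun z hz => huniq z ?_⟩
      show π z = y₀
      rw [hz, hx₀]
    · rintro ⟨x, hx⟩
      exact construction hmin hx
  · intro Γ hfi hdec π hπ hsing
    ext x
    simp only [Set.mem_setOf_eq, Set.mem_preimage]
    constructor
    · intro hx
      exact ⟨x, rfl, fun z hz => unique_fiber_of_rr hmin hπ hsing hx z hz⟩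
    · rintro ⟨z, hz1, hz2⟩
      exact rr_of_unique_fiber hfi hπ fun w hw => (hz2 w hw).trans (hz2 x rfl).symm
end

section
/- Let G be a discrete finitely generated group and let (X, G) be a minimal topological dynamical system. Then (X, G) is an almost 1-1 extension of an odometer — i.e., there exist a decreasing sequence (Γ_i)_{i≥0} of finite-index normal subgroups of G and a factor map π : X → lim_{←i}(G/Γ_i, π_i) such that some point of the odometer has exactly one π-preimage — if and only if X contains a strongly regularly recurrent point. Moreover, for such an almost 1-1 factor map π, the set of strongly regularly recurrent points of X is exactly the π-preimage of the set of points of the odometer having exactly one π-preimage. -/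
open Pointwise MeasureTheory

section OC

variable {G X : Type*} [Group G] [TopologicalSpace X] [MulAction G X]

/-- orbit closure under a subgroup -/
def oc (Γ : Subgroup G) (u : X) : Set X := closure ((· • u) '' (Γ : Set G))

lemma mem_oc_self (Γ : Subgroup G) (u : X) : u ∈ oc Γ u :=
  subset_closure ⟨1, Γ.one_mem, one_smul G u⟩

lemma oc_isClosed (Γ : Subgroup G) (u : X) : IsClosed (oc Γ u) := isClosed_closure

lemma oc_mono {Γ Γ' : Subgroup G} (h : Γ ≤ Γ') (u : X) : oc Γ u ⊆ oc Γ' u :=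
  closure_mono (Set.image_mono h)

lemma smul_image_eq (g : G) (u : X) (Γ : Subgroup G) (hN : Γ.Normal) :
    g • ((· • u) '' (Γ : Set G)) = (· • (g • u)) '' (Γ : Set G) := by
  ext p
  constructor
  · rintro ⟨q, ⟨γ, hγ, rfl⟩, rfl⟩
    exact ⟨g * γ * g⁻¹, hN.conj_mem γ hγ g, by simp [smul_smul, mul_assoc]⟩
  · rintro ⟨γ, hγ, rfl⟩
    refine ⟨(g⁻¹ * γ * g) • u, ⟨g⁻¹ * γ * g, by simpa using hN.conj_mem γ hγ g⁻¹, rfl⟩, ?_⟩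
    simp [smul_smul, mul_assoc]

lemma smul_oc (hc : ∀ g : G, Continuous fun x : X => g • x) (g : G) (u : X)
    (Γ : Subgroup G) (hN : Γ.Normal) : g • oc Γ u = oc Γ (g • u) := by
  haveI : ContinuousConstSMul G X := ⟨hc⟩
  rw [oc, ← closure_smul, smul_image_eq g u Γ hN, oc]

lemma oc_smul_self (Γ : Subgroup G) {γ : G} (hγ : γ ∈ Γ) (u : X) :
    oc Γ (γ • u) = oc Γ u := by
  have himg : (· • (γ • u)) '' (Γ : Set G) = (· • u) '' (Γ : Set G) := by
    ext p
    constructor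
    · rintro ⟨δ, hδ, rfl⟩
      exact ⟨δ * γ, Γ.mul_mem hδ hγ, by simp [smul_smul]⟩
    · rintro ⟨δ, hδ, rfl⟩
      exact ⟨δ * γ⁻¹, Γ.mul_mem hδ (Γ.inv_mem hγ), by simp [smul_smul, mul_assoc]⟩
  unfold oc
  rw [himg]

variable [CompactSpace X]

/-- Main Zorn lemma package: for a finite-index normal subgroup in a minimal system,
translates of one minimal set cover, and every orbit closure of a point in a translate
is that translate. -/
theorem oc_package (hc : ∀ g : G, Continuous fun x : X => g • x)
    (hmin : ∀ x : X, Dense (Set.range fun g : G => g • x))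
    (Γ : Subgroup G) (hN : Γ.Normal) (hFI : Γ.FiniteIndex) (u : X) :
    (∀ u', u' ∈ oc Γ u → oc Γ u' = oc Γ u) ∧ (∀ z : X, ∃ g : G, z ∈ g • oc Γ u) := by
  haveI : ContinuousConstSMul G X := ⟨hc⟩
  haveI : Finite (G ⧸ Γ) := Subgroup.finite_quotient_of_finiteIndex
  -- the family of candidate sets
  set S : Set (Set X) :=
    {A | A.Nonempty ∧ IsClosed A ∧ (∀ γ ∈ Γ, γ • A ⊆ A) ∧ A ⊆ oc Γ u} with hS
  have hocS : oc Γ u ∈ S := by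
    refine ⟨⟨u, mem_oc_self Γ u⟩, oc_isClosed Γ u, ?_, subset_rfl⟩
    intro γ hγ
    rw [smul_oc hc γ u Γ hN, oc_smul_self Γ hγ]
  have hchainlem : ∀ c ⊆ S, IsChain (· ⊆ ·) c → c.Nonempty → ∃ lb ∈ S, ∀ s ∈ c, lb ⊆ s := by
    intro c hcS hchain hcne
    refine ⟨⋂ A ∈ c, A, ?_, fun A hA => Set.biInter_subset_of_mem hA⟩
    have hne : (⋂ A ∈ c, A).Nonempty := by
      haveI : Nonempty c := hcne.to_subtype
      have hdir : Directed (fun x1 x2 : Set X => x1 ⊇ x2) (fun A : c => (A : Set X)) := by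
        intro A B
        rcases hchain.total A.2 B.2 with h | h
        · exact ⟨A, subset_rfl, h⟩
        · exact ⟨B, h, subset_rfl⟩
      have := IsCompact.nonempty_iInter_of_directed_nonempty_isCompact_isClosed
        (fun A : c => (A : Set X))
        hdir
        (fun A => (hcS A.2).1)
        (fun A => (hcS A.2).2.1.isCompact)
        (fun A => (hcS A.2).2.1)
      rwa [Set.biInter_eq_iInter]
    refine ⟨hne, isClosed_biInter fun A hA => (hcS hA).2.1, ?_, ?_⟩
    · intro γ hγ
      intro p hp
      simp only [Set.mem_iInter] at *
      intro A hA
      obtain ⟨q, hq, rfl⟩ := hp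
      exact (hcS hA).2.2.1 γ hγ ⟨q, Set.mem_iInter₂.1 hq A hA, rfl⟩
    · obtain ⟨A, hA⟩ := hcne
      exact (Set.biInter_subset_of_mem hA).trans (hcS hA).2.2.2
  obtain ⟨M, hMsub, hMmin⟩ := zorn_superset_nonempty S hchainlem (oc Γ u) hocS
  -- M is a minimal element of S
  obtain ⟨hMne, hMcl, hMinv, hMoc⟩ := hMmin.1
  have hMinv' : ∀ γ ∈ Γ, γ • M = M := by
    intro γ hγ
    refine subset_antisymm (hMinv γ hγ) ?_
    intro p hp
    rw [Set.mem_smul_set_iff_inv_smul_mem]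
    exact hMinv γ⁻¹ (Γ.inv_mem hγ) ⟨p, hp, rfl⟩
  have hMorb : ∀ p ∈ M, oc Γ p = M := by
    intro p hp
    have h1 : oc Γ p ⊆ M := by
      apply closure_minimal ?_ hMcl
      rintro q ⟨γ, hγ, rfl⟩
      rw [← hMinv' γ hγ]
      exact ⟨p, hp, rfl⟩
    have h2 : oc Γ p ∈ S := by
      refine ⟨⟨p, mem_oc_self Γ p⟩, oc_isClosed Γ p, ?_, h1.trans hMoc⟩
      intro γ hγ
      rw [smul_oc hc γ p Γ hN, oc_smul_self Γ hγ]
    exact subset_antisymm h1 (hMmin.2 h2 h1)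
  -- translates of M cover X
  have hwd : ∀ (a b : G), (QuotientGroup.mk a : G ⧸ Γ) = QuotientGroup.mk b → a • M = b • M := by
    intro a b hab
    rw [QuotientGroup.eq] at hab
    calc a • M = a • ((a⁻¹ * b) • M) := by rw [hMinv' _ hab]
    _ = b • M := by rw [smul_smul]; simp
  have hcoverU : (⋃ c : G ⧸ Γ, Quotient.lift (fun g : G => g • M)
      (fun a b hab => hwd a b (Quotient.sound hab)) c) = Set.univ := by
    set U := ⋃ c : G ⧸ Γ, Quotient.lift (fun g : G => g • M)
      (fun a b hab => hwd a b (Quotient.sound hab)) c with hU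
    have hUcl : IsClosed U := by
      apply isClosed_iUnion_of_finite
      intro c
      induction c using Quotient.ind
      exact hMcl.smul _
    obtain ⟨m, hm⟩ := hMne
    have hrange : Set.range (fun g : G => g • m) ⊆ U := by
      rintro p ⟨g, rfl⟩
      exact Set.mem_iUnion.2 ⟨QuotientGroup.mk g, ⟨m, hm, rfl⟩⟩
    have hdense : Dense U := (hmin m).mono hrange
    rw [← hUcl.closure_eq]
    exact hdense.closure_eq
  -- relate M to oc Γ u
  obtain ⟨h0, hu0⟩ : ∃ g : G, u ∈ g • M := by
    have : u ∈ (⋃ c : G ⧸ Γ, Quotient.lift (fun g : G => g • M)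
        (fun a b hab => hwd a b (Quotient.sound hab)) c) := by rw [hcoverU]; trivial
    obtain ⟨A, ⟨c, rfl⟩, hA⟩ := this
    induction c using Quotient.ind with
    | _ g => exact ⟨g, hA⟩
  have hMu : oc Γ u = h0 • M := by
    have : h0⁻¹ • u ∈ M := by rwa [← Set.mem_smul_set_iff_inv_smul_mem]
    have h1 := hMorb _ this
    calc oc Γ u = oc Γ (h0 • (h0⁻¹ • u)) := by rw [smul_inv_smul]
    _ = h0 • oc Γ (h0⁻¹ • u) := (smul_oc hc h0 _ Γ hN).symm
    _ = h0 • M := by rw [h1]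
  constructor
  · intro u' hu'
    have hu'M : h0⁻¹ • u' ∈ M := by
      rw [hMu] at hu'
      rwa [← Set.mem_smul_set_iff_inv_smul_mem]
    calc oc Γ u' = oc Γ (h0 • (h0⁻¹ • u')) := by rw [smul_inv_smul]
    _ = h0 • oc Γ (h0⁻¹ • u') := (smul_oc hc h0 _ Γ hN).symm
    _ = h0 • M := by rw [hMorb _ hu'M]
    _ = oc Γ u := hMu.symm
  · intro z
    have : z ∈ (⋃ c : G ⧸ Γ, Quotient.lift (fun g : G => g • M)
        (fun a b hab => hwd a b (Quotient.sound hab)) c) := by rw [hcoverU]; trivial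
    obtain ⟨A, ⟨c, rfl⟩, hA⟩ := this
    induction c using Quotient.ind with
    | _ g =>
      refine ⟨g * h0⁻¹, ?_⟩
      rw [hMu, smul_smul]
      simpa using hA

theorem oc_eq_of_mem (hc : ∀ g : G, Continuous fun x : X => g • x)
    (hmin : ∀ x : X, Dense (Set.range fun g : G => g • x))
    (Γ : Subgroup G) (hN : Γ.Normal) (hFI : Γ.FiniteIndex) {u u' : X}
    (h : u' ∈ oc Γ u) : oc Γ u' = oc Γ u :=
  (oc_package hc hmin Γ hN hFI u).1 u' h

theorem oc_cover (hc : ∀ g : G, Continuous fun x : X => g • x)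
    (hmin : ∀ x : X, Dense (Set.range fun g : G => g • x))
    (Γ : Subgroup G) (hN : Γ.Normal) (hFI : Γ.FiniteIndex) (u z : X) :
    ∃ g : G, z ∈ g • oc Γ u :=
  (oc_package hc hmin Γ hN hFI u).2 z

end OC
section Odo

variable {G : Type*} [Group G] {Γ : ℕ → Subgroup G}

instance quot_discrete {G : Type*} [Group G] [TopologicalSpace G] [DiscreteTopology G]
    (Λ : Subgroup G) : DiscreteTopology (G ⧸ Λ) := by
  constructor
  ext s
  constructor
  · intro _; trivial
  · intro _
    show IsOpen s
    rw [isOpen_coinduced (f := (QuotientGroup.mk : G → G ⧸ Λ))]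
    exact isOpen_discrete _

lemma odo_smul_coord (g : G) (w : Subodometer Γ) (i : ℕ) :
    (g • w).1 i = g • w.1 i := rfl

lemma odo_coord_down_succ {w w' : Subodometer Γ} {n : ℕ}
    (h : w.1 (n + 1) = w'.1 (n + 1)) : w.1 n = w'.1 n := by
  obtain ⟨g, hg⟩ := QuotientGroup.mk_surjective (w.1 (n + 1))
  have h1 := w.2 n g hg
  have h2 := w'.2 n g (by rw [hg, h])
  rw [← h1, h2]

lemma odo_coord_down {w w' : Subodometer Γ} {m n : ℕ} (hmn : m ≤ n)
    (h : w.1 n = w'.1 n) : w.1 m = w'.1 m := by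
  obtain ⟨k, rfl⟩ := Nat.exists_eq_add_of_le hmn
  induction k with
  | zero => exact h
  | succ k ih => exact ih (Nat.le_add_right m k) (odo_coord_down_succ h)

variable [TopologicalSpace G] [DiscreteTopology G]

lemma odo_coord_continuous (i : ℕ) :
    Continuous (fun w : Subodometer Γ => w.1 i) :=
  (continuous_apply i).comp continuous_subtype_val

lemma odo_cyl_isClopen (i : ℕ) (c : G ⧸ Γ i) :
    IsClopen {w : Subodometer Γ | w.1 i = c} := by
  have h1 : {w : Subodometer Γ | w.1 i = c} = (fun w : Subodometer Γ => w.1 i) ⁻¹' {c} := rfl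
  rw [h1]
  constructor
  · exact IsClosed.preimage (odo_coord_continuous i) (isClosed_discrete ({c} : Set (G ⧸ Γ i)))
  · exact IsOpen.preimage (odo_coord_continuous i) (isOpen_discrete ({c} : Set (G ⧸ Γ i)))

end Odo

section Easy

variable {G X : Type*} [Group G] [TopologicalSpace G] [DiscreteTopology G]
  [TopologicalSpace X] [CompactSpace X] [MulAction G X]

theorem srr_of_unique {Γ : ℕ → Subgroup G} (hnorm : ∀ i, (Γ i).Normal)
    (hfin : ∀ i, (Γ i).FiniteIndex)
    {π : X → Subodometer Γ} (hπc : Continuous π)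
    (hπe : ∀ (g : G) (x : X), π (g • x) = g • π x)
    {z0 : X} (hz0 : ∀ z, π z = π z0 → z = z0) :
    StronglyRegularlyRecurrent G z0 := by
  intro V hV hzV
  set y := π z0 with hy
  set D : ℕ → Set X := fun n => π ⁻¹' {w | w.1 n = y.1 n} with hD
  have hDclopen : ∀ n, IsClopen (D n) := fun n =>
    (odo_cyl_isClopen n (y.1 n)).preimage hπc
  have hz0D : ∀ n, z0 ∈ D n := fun n => rfl
  have hDdec : ∀ n, D (n + 1) ⊆ D n := by
    intro n z hz
    exact odo_coord_down_succ hz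
  have hDint : ⋂ n, D n ⊆ {z0} := by
    intro z hz
    simp only [Set.mem_iInter] at hz
    have : π z = y := Subtype.ext (funext fun n => hz n)
    exact hz0 z this
  have hsub : ∃ n, D n ⊆ V := by
    by_contra h
    push_neg at h
    have hne : ∀ n, (D n ∩ Vᶜ).Nonempty := by
      intro n
      obtain ⟨z, hzD, hzV'⟩ := Set.not_subset.1 (h n)
      exact ⟨z, hzD, hzV'⟩
    have hcl : ∀ n, IsClosed (D n ∩ Vᶜ) := fun n =>
      ((hDclopen n).1).inter (isClosed_compl_iff.2 hV)
    have := IsCompact.nonempty_iInter_of_sequence_nonempty_isCompact_isClosed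
      (fun n => D n ∩ Vᶜ)
      (fun n => Set.inter_subset_inter_left _ (hDdec n))
      hne ((hcl 0).isCompact) hcl
    obtain ⟨z, hz⟩ := this
    simp only [Set.mem_iInter, Set.mem_inter_iff] at hz
    have hzz : z ∈ ⋂ n, D n := Set.mem_iInter.2 fun n => (hz n).1
    have : z = z0 := hDint hzz
    exact (hz 0).2 (this ▸ hzV)
  obtain ⟨n, hn⟩ := hsub
  refine ⟨D n, hDclopen n, hz0D n, hn, Γ n, hnorm n, hfin n, ?_⟩
  obtain ⟨a, ha⟩ := QuotientGroup.mk_surjective (y.1 n)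
  ext g
  have hcoord : (π (g • z0)).1 n = g • y.1 n := by rw [hπe, odo_smul_coord]
  constructor
  · intro hg
    have : (π (g • z0)).1 n = y.1 n := hg
    rw [hcoord, ← ha] at this
    have : QuotientGroup.mk (g * a) = (QuotientGroup.mk a : G ⧸ Γ n) := this
    rw [QuotientGroup.eq] at this
    have h2 : a * ((g * a)⁻¹ * a) * a⁻¹ ∈ Γ n := (hnorm n).conj_mem _ this a
    simpa [mul_assoc] using (Γ n).inv_mem h2
  · intro hg
    show (π (g • z0)).1 n = y.1 n
    rw [hcoord, ← ha]
    show QuotientGroup.mk (g * a) = (QuotientGroup.mk a : G ⧸ Γ n)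
    rw [QuotientGroup.eq]
    have h2 := (hnorm n).conj_mem _ ((Γ n).inv_mem hg) a⁻¹
    simpa [mul_assoc] using h2

end Easy

section Hard

variable {G X : Type*} [Group G] [TopologicalSpace G] [DiscreteTopology G]
  [MetricSpace X] [CompactSpace X] [MulAction G X]

theorem srr_unique (hc : ∀ g : G, Continuous fun x : X => g • x)
    (hmin : ∀ x : X, Dense (Set.range fun g : G => g • x))
    {Γ : ℕ → Subgroup G}
    {π : X → Subodometer Γ} (hπ : IsFactorMap G π)
    {y : Subodometer Γ} (hy : ∃! z : X, π z = y)
    {x : X} (hx : StronglyRegularlyRecurrent G x) :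
    ∀ z, π z = π x → z = x := by
  haveI : ContinuousConstSMul G X := ⟨hc⟩
  obtain ⟨z0, hz0y, hz0u⟩ := hy
  obtain ⟨hπc, hπs, hπe⟩ := hπ
  intro z hz
  by_contra hne
  have hd : 0 < dist z x := dist_pos.2 hne
  obtain ⟨W, hWcl, hxW, hWV, Λ, hΛN, hΛF, hΛr⟩ :=
    hx (Metric.ball x (dist z x)) Metric.isOpen_ball (Metric.mem_ball_self hd)
  haveI : Finite (G ⧸ Λ) := Subgroup.finite_quotient_of_finiteIndex
  set v := π x with hv
  have hFne : ∀ n : ℕ, ∃ g : G, (g • v).1 n = y.1 n := by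
    intro n
    obtain ⟨a, ha⟩ := QuotientGroup.mk_surjective (v.1 n)
    obtain ⟨b, hb⟩ := QuotientGroup.mk_surjective (y.1 n)
    refine ⟨b * a⁻¹, ?_⟩
    rw [odo_smul_coord, ← ha]
    show QuotientGroup.mk (b * a⁻¹ * a) = y.1 n
    rw [show b * a⁻¹ * a = b by group]
    exact hb
  choose gg hgg using hFne
  obtain ⟨c, hcinf⟩ := Finite.exists_infinite_fiber (fun n => (QuotientGroup.mk (gg n) : G ⧸ Λ))
  have hcinf' : ((fun n => (QuotientGroup.mk (gg n) : G ⧸ Λ)) ⁻¹' {c}).Infinite :=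
    Set.infinite_coe_iff.mp hcinf
  obtain ⟨cc, hcc⟩ := QuotientGroup.mk_surjective c
  have hEne : ∀ n : ℕ, ∃ γ : G, γ ∈ Λ ∧ ((cc * γ) • v).1 n = y.1 n := by
    intro n
    obtain ⟨m, hm2, hm1⟩ := hcinf'.exists_gt n
    refine ⟨cc⁻¹ * gg m, ?_, ?_⟩
    · have : (QuotientGroup.mk cc : G ⧸ Λ) = QuotientGroup.mk (gg m) := by
        rw [hcc]; exact hm2.symm
      rwa [QuotientGroup.eq] at this
    · rw [show cc * (cc⁻¹ * gg m) = gg m by group]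
      exact odo_coord_down (le_of_lt hm1) (hgg m)
  set E : ℕ → Set G := fun n => {γ : G | γ ∈ Λ ∧ ((cc * γ) • v).1 n = y.1 n} with hE
  have hEdec : ∀ n, E (n + 1) ⊆ E n := by
    rintro n γ ⟨h1, h2⟩
    exact ⟨h1, odo_coord_down_succ h2⟩
  set P : ℕ → Set (X × X) := fun n => closure ((fun γ : G => (γ • x, γ • z)) '' E n) with hP
  have hPint : (⋂ n, P n).Nonempty := by
    apply IsCompact.nonempty_iInter_of_sequence_nonempty_isCompact_isClosed
    · intro n
      exact closure_mono (Set.image_mono (hEdec n))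
    · intro n
      obtain ⟨γ, hγ⟩ := hEne n
      exact ⟨_, subset_closure ⟨γ, hγ, rfl⟩⟩
    · exact isClosed_closure.isCompact
    · intro n; exact isClosed_closure
  obtain ⟨⟨p, q⟩, hpq⟩ := hPint
  simp only [Set.mem_iInter] at hpq
  -- projections
  have hp : ∀ n, p ∈ closure ((· • x) '' E n) := by
    intro n
    have h1 : p ∈ Prod.fst '' closure ((fun γ : G => (γ • x, γ • z)) '' E n) :=
      ⟨(p, q), hpq n, rfl⟩
    have h2 := image_closure_subset_closure_image (f := (Prod.fst : X × X → X))
      (s := (fun γ : G => (γ • x, γ • z)) '' E n) continuous_fst h1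
    rwa [Set.image_image] at h2
  have hq : ∀ n, q ∈ closure ((· • z) '' E n) := by
    intro n
    have h1 : q ∈ Prod.snd '' closure ((fun γ : G => (γ • x, γ • z)) '' E n) :=
      ⟨(p, q), hpq n, rfl⟩
    have h2 := image_closure_subset_closure_image (f := (Prod.snd : X × X → X))
      (s := (fun γ : G => (γ • x, γ • z)) '' E n) continuous_snd h1
    rwa [Set.image_image] at h2
  have key : ∀ (u p' : X), π u = v → (∀ n, p' ∈ closure ((· • u) '' E n)) → cc • p' = z0 := by
    intro u p' hu hp'
    apply hz0u
    apply Subtype.ext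
    funext n
    have h2 : cc • p' ∈ closure ((fun γ : G => (cc * γ) • u) '' E n) := by
      have h3 : cc • p' ∈ cc • closure ((· • u) '' E n) := ⟨p', hp' n, rfl⟩
      rw [← closure_smul] at h3
      have h4 : cc • ((· • u) '' E n) = (fun γ : G => (cc * γ) • u) '' E n := by
        ext r
        constructor
        · rintro ⟨s, ⟨γ, hγ, rfl⟩, rfl⟩
          exact ⟨γ, hγ, by simp [smul_smul]⟩
        · rintro ⟨γ, hγ, rfl⟩
          exact ⟨γ • u, ⟨γ, hγ, rfl⟩, by simp [smul_smul]⟩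
      rwa [h4] at h3
    have h5 : π (cc • p') ∈ closure ((fun γ : G => (cc * γ) • v) '' E n) := by
      have h6 : π (cc • p') ∈ π '' closure ((fun γ : G => (cc * γ) • u) '' E n) :=
        ⟨cc • p', h2, rfl⟩
      have h7 := image_closure_subset_closure_image hπc h6
      rwa [Set.image_image, show (fun γ : G => π ((cc * γ) • u)) = fun γ : G => (cc * γ) • v
        by funext γ; rw [hπe, hu]] at h7
    have h8 : closure ((fun γ : G => (cc * γ) • v) '' E n)
        ⊆ {w : Subodometer Γ | w.1 n = y.1 n} := by
      apply closure_minimal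
      · rintro w ⟨γ, hγ, rfl⟩
        exact hγ.2
      · exact (odo_cyl_isClopen n (y.1 n)).1
    exact h8 h5
  have hp1 : cc • p = z0 := key x p rfl hp
  have hq1 : cc • q = z0 := key z q hz hq
  have hpq' : p = q := MulAction.injective cc (hp1.trans hq1.symm)
  have hEΛ : ∀ n, E n ⊆ (Λ : Set G) := fun n γ hγ => hγ.1
  have hpx : p ∈ oc Λ x := closure_mono (Set.image_mono (hEΛ 0)) (hp 0)
  have hpz : p ∈ oc Λ z := by
    rw [hpq']
    exact closure_mono (Set.image_mono (hEΛ 0)) (hq 0)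
  have h5 := oc_eq_of_mem hc hmin Λ hΛN hΛF hpx
  have h6 := oc_eq_of_mem hc hmin Λ hΛN hΛF hpz
  have hzx : z ∈ oc Λ x := by
    rw [← h5, h6]
    exact mem_oc_self Λ z
  have hsubW : oc Λ x ⊆ W := by
    apply closure_minimal ?_ hWcl.1
    rintro w ⟨γ, hγ, rfl⟩
    have : γ ∈ ReturnTimes G x W := by rw [hΛr]; exact hγ
    exact this
  have : z ∈ Metric.ball x (dist z x) := hWV (hsubW hzx)
  simp [Metric.mem_ball] at this

end Hard

section Construct

variable {G X : Type*} [Group G] [TopologicalSpace G] [DiscreteTopology G]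
  [MetricSpace X] [CompactSpace X] [MulAction G X]

theorem exists_odometer (hc : ∀ g : G, Continuous fun x : X => g • x)
    (hmin : ∀ x : X, Dense (Set.range fun g : G => g • x))
    {x0 : X} (hx0 : StronglyRegularlyRecurrent G x0) :
    ∃ Γ : ℕ → Subgroup G, (∀ i, (Γ i).Normal) ∧ (∀ i, (Γ i).FiniteIndex) ∧
      (∀ i, Γ (i + 1) ≤ Γ i) ∧
      ∃ π : X → Subodometer Γ, IsFactorMap G π ∧ ∃ y : Subodometer Γ, ∃! z : X, π z = y := by
  haveI : ContinuousConstSMul G X := ⟨hc⟩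
  -- Step 1: choose nested clopen sets with group return times
  have step : ∀ (i : ℕ) (W : Set X), IsClopen W → x0 ∈ W →
      ∃ p : Set X × Subgroup G, IsClopen p.1 ∧ x0 ∈ p.1 ∧ p.1 ⊆ W ∧
        p.1 ⊆ Metric.ball x0 (1 / (i + 1 : ℝ)) ∧ p.2.Normal ∧ p.2.FiniteIndex ∧
        ReturnTimes G x0 p.1 = ↑p.2 := by
    intro i W hW hxW
    have hball : (0 : ℝ) < 1 / (i + 1 : ℝ) := by positivity
    obtain ⟨W', h1, h2, h3, Λ, h4, h5, h6⟩ := hx0 (W ∩ Metric.ball x0 (1 / (i + 1 : ℝ)))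
      (hW.2.inter Metric.isOpen_ball) ⟨hxW, Metric.mem_ball_self hball⟩
    exact ⟨(W', Λ), h1, h2, h3.trans Set.inter_subset_left,
      h3.trans Set.inter_subset_right, h4, h5, h6⟩
  choose! F hF1 hF2 hF3 hF4 hF5 hF6 hF7 using step
  set WW : ℕ → Set X × Subgroup G :=
    fun n => Nat.rec (F 0 Set.univ) (fun i prev => F (i + 1) prev.1) n with hWW
  have hWWs : ∀ i, WW (i + 1) = F (i + 1) (WW i).1 := fun i => rfl
  have hprops : ∀ i, IsClopen (WW i).1 ∧ x0 ∈ (WW i).1 ∧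
      (WW i).1 ⊆ Metric.ball x0 (1 / (i + 1 : ℝ)) ∧ (WW i).2.Normal ∧
      (WW i).2.FiniteIndex ∧ ReturnTimes G x0 (WW i).1 = ↑(WW i).2 := by
    intro i
    induction i with
    | zero =>
      exact ⟨hF1 0 Set.univ isClopen_univ (Set.mem_univ x0),
        hF2 0 Set.univ isClopen_univ (Set.mem_univ x0),
        hF4 0 Set.univ isClopen_univ (Set.mem_univ x0),
        hF5 0 Set.univ isClopen_univ (Set.mem_univ x0),
        hF6 0 Set.univ isClopen_univ (Set.mem_univ x0),
        hF7 0 Set.univ isClopen_univ (Set.mem_univ x0)⟩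
    | succ i ih =>
      obtain ⟨h1, h2, _, _, _, _⟩ := ih
      rw [hWWs]
      exact ⟨hF1 (i+1) (WW i).1 h1 h2, hF2 (i+1) (WW i).1 h1 h2, hF4 (i+1) (WW i).1 h1 h2,
        hF5 (i+1) (WW i).1 h1 h2, hF6 (i+1) (WW i).1 h1 h2, hF7 (i+1) (WW i).1 h1 h2⟩
  have hnested : ∀ i, (WW (i + 1)).1 ⊆ (WW i).1 := by
    intro i
    rw [hWWs]
    exact hF3 (i + 1) (WW i).1 (hprops i).1 (hprops i).2.1
  set Γ : ℕ → Subgroup G := fun i => (WW i).2 with hΓ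
  set Wi : ℕ → Set X := fun i => (WW i).1 with hWi
  have hret : ∀ i, ReturnTimes G x0 (Wi i) = ↑(Γ i) := fun i => (hprops i).2.2.2.2.2
  have hnorm : ∀ i, (Γ i).Normal := fun i => (hprops i).2.2.2.1
  have hfin : ∀ i, (Γ i).FiniteIndex := fun i => (hprops i).2.2.2.2.1
  have hdec : ∀ i, Γ (i + 1) ≤ Γ i := by
    intro i γ hγ
    have h1 : γ ∈ ReturnTimes G x0 (Wi (i + 1)) := by
      rw [hret (i + 1)]; exact hγ
    have h2 : γ • x0 ∈ Wi i := hnested i h1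
    have h3 : γ ∈ ReturnTimes G x0 (Wi i) := h2
    rw [hret i] at h3
    exact h3
  -- Step 2: minimal sets
  set M : ℕ → Set X := fun i => oc (Γ i) x0 with hM
  have hMW : ∀ i, M i ⊆ Wi i := by
    intro i
    apply closure_minimal ?_ (hprops i).1.1
    rintro w ⟨γ, hγ, rfl⟩
    have : γ ∈ ReturnTimes G x0 (Wi i) := by rw [hret i]; exact hγ
    exact this
  have hMx0 : ∀ i, x0 ∈ M i := fun i => mem_oc_self _ x0
  have hMdec : ∀ i, M (i + 1) ⊆ M i := fun i => oc_mono (hdec i) x0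
  have hγM : ∀ i (γ : G), γ ∈ Γ i → γ • M i = M i := by
    intro i γ hγ
    rw [hM]
    rw [smul_oc hc γ x0 (Γ i) (hnorm i), oc_smul_self (Γ i) hγ]
  have hcov : ∀ (z : X) (i : ℕ), ∃ g : G, z ∈ g • M i :=
    fun z i => oc_cover hc hmin (Γ i) (hnorm i) (hfin i) x0 z
  have hocp : ∀ (i : ℕ) (g : G) (p : X), p ∈ g • M i → oc (Γ i) p = g • M i := by
    intro i g p hp
    have h1 : g⁻¹ • p ∈ M i := Set.mem_smul_set_iff_inv_smul_mem.1 hp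
    have h2 : oc (Γ i) (g⁻¹ • p) = M i := oc_eq_of_mem hc hmin (Γ i) (hnorm i) (hfin i) h1
    calc oc (Γ i) p = oc (Γ i) (g • (g⁻¹ • p)) := by rw [smul_inv_smul]
    _ = g • oc (Γ i) (g⁻¹ • p) := (smul_oc hc g _ (Γ i) (hnorm i)).symm
    _ = g • M i := by rw [h2]
  have hsmulMeq : ∀ (i : ℕ) (g h : G), (QuotientGroup.mk g : G ⧸ Γ i) = QuotientGroup.mk h →
      g • M i = h • M i := by
    intro i g h hgh
    rw [QuotientGroup.eq] at hgh
    calc g • M i = g • ((g⁻¹ * h) • M i) := by rw [hγM i _ hgh]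
    _ = h • M i := by rw [smul_smul]; simp
  have huniq : ∀ (i : ℕ) (g h : G) (z : X), z ∈ g • M i → z ∈ h • M i →
      (QuotientGroup.mk g : G ⧸ Γ i) = QuotientGroup.mk h := by
    intro i g h z hzg hzh
    have e1 := hocp i g z hzg
    have e2 := hocp i h z hzh
    have e3 : (h⁻¹ * g) • M i = M i := by
      rw [← smul_smul, ← e1, e2, inv_smul_smul]
    have e4 : (h⁻¹ * g) • x0 ∈ M i := by
      rw [← e3]
      exact ⟨x0, hMx0 i, rfl⟩
    have e5 : (h⁻¹ * g) ∈ ReturnTimes G x0 (Wi i) := hMW i e4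
    rw [hret i] at e5
    exact ((QuotientGroup.eq).2 e5).symm
  have hmove : ∀ (i : ℕ) (g h : G) (z : X), z ∈ g • M i →
      (QuotientGroup.mk g : G ⧸ Γ i) = QuotientGroup.mk h → z ∈ h • M i := by
    intro i g h z hz hgh
    rwa [hsmulMeq i g h hgh] at hz
  -- Step 3: the factor map
  choose cf hcf using hcov
  set f : X → ∀ i, G ⧸ Γ i := fun z i => QuotientGroup.mk (cf z i) with hf
  have hfu : ∀ (z : X) (i : ℕ) (g : G), z ∈ g • M i → f z i = QuotientGroup.mk g :=
    fun z i g hg => huniq i (cf z i) g z (hcf z i) hg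
  have hfmem : ∀ (z : X) (i : ℕ) (g : G), f z i = QuotientGroup.mk g → z ∈ g • M i :=
    fun z i g hg => hmove i (cf z i) g z (hcf z i) hg
  have hcompat : ∀ z, Compat Γ (f z) := by
    intro z i g hg
    have h1 : z ∈ g • M (i + 1) := hfmem z (i + 1) g hg.symm
    have h2 : z ∈ g • M i := Set.smul_set_mono (hMdec i) h1
    exact (hfu z i g h2).symm
  set π : X → Subodometer Γ := fun z => ⟨f z, hcompat z⟩ with hπ
  -- fibers
  have hfib : ∀ (i : ℕ) (g : G), (fun z => f z i) ⁻¹' {QuotientGroup.mk g} = g • M i := by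
    intro i g
    ext z
    constructor
    · intro hz
      exact hfmem z i g hz
    · intro hz
      exact hfu z i g hz
  have hfibclosed : ∀ (i : ℕ) (c : G ⧸ Γ i), IsClosed ((fun z => f z i) ⁻¹' {c}) := by
    intro i c
    obtain ⟨g, rfl⟩ := QuotientGroup.mk_surjective c
    rw [hfib i g]
    exact (oc_isClosed (Γ i) x0).smul g
  haveI : ∀ i, Finite (G ⧸ Γ i) := fun i =>
    haveI := hfin i
    Subgroup.finite_quotient_of_finiteIndex
  have hfibopen : ∀ (i : ℕ) (c : G ⧸ Γ i), IsOpen ((fun z => f z i) ⁻¹' {c}) := by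
    intro i c
    rw [← isClosed_compl_iff]
    have hcompl : ((fun z => f z i) ⁻¹' {c})ᶜ = ⋃ c' ∈ ({c}ᶜ : Set (G ⧸ Γ i)),
        (fun z => f z i) ⁻¹' {c'} := by
      ext z
      simp only [Set.mem_compl_iff, Set.mem_preimage, Set.mem_singleton_iff, Set.mem_iUnion]
      constructor
      · intro hz
        exact ⟨f z i, hz, rfl⟩
      · rintro ⟨c', hc', rfl⟩
        exact hc'
    rw [hcompl]
    exact Set.Finite.isClosed_biUnion (Set.toFinite _) (fun c' _ => hfibclosed i c')
  have hπcont : Continuous π := by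
    apply Continuous.subtype_mk
    apply continuous_pi
    intro i
    rw [continuous_discrete_rng]
    intro c
    exact hfibopen i c
  -- surjectivity
  have hπsurj : Function.Surjective π := by
    intro w
    set T : ℕ → Set X := fun n => (fun z => f z n) ⁻¹' {w.1 n} with hT
    have hTne : ∀ n, (T n).Nonempty := by
      intro n
      obtain ⟨g, hg⟩ := QuotientGroup.mk_surjective (w.1 n)
      refine ⟨g • x0, ?_⟩
      have : g • x0 ∈ g • M n := ⟨x0, hMx0 n, rfl⟩
      show f (g • x0) n = w.1 n
      rw [hfu (g • x0) n g this, hg]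
    have hTdec : ∀ n, T (n + 1) ⊆ T n := by
      intro n z hz
      have h1 : f z (n + 1) = w.1 (n + 1) := hz
      have h2 : z ∈ cf z (n + 1) • M (n + 1) := hcf z (n + 1)
      have h3 : z ∈ cf z (n + 1) • M n := Set.smul_set_mono (hMdec n) h2
      have h4 : f z n = QuotientGroup.mk (cf z (n + 1)) := hfu z n _ h3
      have h5 : (QuotientGroup.mk (cf z (n + 1)) : G ⧸ Γ (n + 1)) = w.1 (n + 1) := h1
      have h6 := w.2 n _ h5
      show f z n = w.1 n
      rw [h4, h6]
    obtain ⟨z, hz⟩ := IsCompact.nonempty_iInter_of_sequence_nonempty_isCompact_isClosed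
      T hTdec hTne ((hfibclosed 0 (w.1 0)).isCompact) (fun n => hfibclosed n (w.1 n))
    simp only [Set.mem_iInter] at hz
    exact ⟨z, Subtype.ext (funext fun n => hz n)⟩
  -- equivariance
  have hπequi : ∀ (g : G) (z : X), π (g • z) = g • π z := by
    intro g z
    apply Subtype.ext
    funext i
    show f (g • z) i = g • f z i
    have h1 : z ∈ cf z i • M i := hcf z i
    have h2 : g • z ∈ (g * cf z i) • M i := by
      rw [← smul_smul]
      exact ⟨z, h1, rfl⟩
    rw [hfu (g • z) i _ h2]
    rfl
  -- the unique fiber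
  refine ⟨Γ, hnorm, hfin, hdec, π, ⟨hπcont, hπsurj, hπequi⟩, π x0, x0, rfl, ?_⟩
  intro z hz
  have hzM : ∀ i, z ∈ M i := by
    intro i
    have h1 : f z i = f x0 i := congrFun (congrArg Subtype.val hz) i
    have h2 : f x0 i = QuotientGroup.mk (1 : G) := by
      apply hfu
      rw [one_smul]
      exact hMx0 i
    have h3 : z ∈ (1 : G) • M i := hfmem z i 1 (h1.trans h2)
    rwa [one_smul] at h3
  have hdist : ∀ i : ℕ, dist z x0 < 1 / (i + 1 : ℝ) := by
    intro i
    have := (hprops i).2.2.1 (hMW i (hzM i))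
    rwa [Metric.mem_ball] at this
  by_contra hne
  have hpos : 0 < dist z x0 := dist_pos.2 hne
  obtain ⟨n, hn⟩ := exists_nat_one_div_lt hpos
  exact absurd (hdist n) (not_lt.2 (le_of_lt hn))

end Construct

/-- Theorem `almost`, odometer case: a minimal system `(X, G)` is an
almost 1-1 extension of an odometer iff it has a strongly regularly recurrent point; and
for any such almost 1-1 factor map, the strongly regularly recurrent points are exactly
the preimages of the points with a single preimage. -/
theorem statement8 {G X : Type*} [Group G] [Group.FG G] [TopologicalSpace G]
    [DiscreteTopology G] [MetricSpace X] [CompactSpace X] [MulAction G X]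
    (hc : ∀ g : G, Continuous fun x : X => g • x)
    (hmin : ∀ x : X, Dense (Set.range fun g : G => g • x)) :
    ((∃ Γ : ℕ → Subgroup G, (∀ i, (Γ i).Normal) ∧ (∀ i, (Γ i).FiniteIndex) ∧
        (∀ i, Γ (i + 1) ≤ Γ i) ∧
        ∃ π : X → Subodometer Γ, IsFactorMap G π ∧ ∃ y : Subodometer Γ, ∃! z : X, π z = y)
      ↔ ∃ x : X, StronglyRegularlyRecurrent G x) ∧
    (∀ Γ : ℕ → Subgroup G, (∀ i, (Γ i).Normal) → (∀ i, (Γ i).FiniteIndex) →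
      (∀ i, Γ (i + 1) ≤ Γ i) →
      ∀ π : X → Subodometer Γ, IsFactorMap G π → (∃ y : Subodometer Γ, ∃! z : X, π z = y) →
        {x : X | StronglyRegularlyRecurrent G x}
          = π ⁻¹' {y : Subodometer Γ | ∃! z : X, π z = y}) := by
  constructor
  · constructor
    · rintro ⟨Γ, hn, hf, hd, π, hπ, y, hy⟩
      obtain ⟨z0, hz0y, hz0u⟩ := hy
      refine ⟨z0, srr_of_unique hn hf hπ.1 hπ.2.2 ?_⟩
      intro z hzz
      exact hz0u z (show π z = y by rw [hzz, hz0y])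
    · rintro ⟨x, hx⟩
      exact exists_odometer hc hmin hx
  · intro Γ hn hf hd π hπ hy
    obtain ⟨y0, hy0⟩ := hy
    ext x
    simp only [Set.mem_setOf_eq, Set.mem_preimage]
    constructor
    · intro hx
      exact ⟨x, rfl, fun z hzz => srr_unique hc hmin hπ hy0 hx z hzz⟩
    · intro hx
      obtain ⟨z1, hz1, hu⟩ := hx
      have hx1 : x = z1 := hu x rfl
      refine srr_of_unique hn hf hπ.1 hπ.2.2 (z0 := x) ?_
      intro z hzz
      rw [hu z hzz, ← hx1]
end
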